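/- arXiv:1406.7223 — 4 statements merged into one kernel-verified Lean document; each statement's English description precedes it below -/
import Mathlib

section
/- Let f : ℝ → ℝ be continuous and nondecreasing, and let u ∈ C²(ℝⁿ) satisfy ℐu(x) = f(u(x)) for every x ∈ ℝⁿ. If u(x) ≤ K(1 + |x|^κ) for all x ∈ ℝⁿ, for some K ≥ 0 and κ ∈ [0, 2s), then ℐu(x) ≤ 0 for every x ∈ ℝⁿ. -/
open MeasureTheory
open scoped RealInnerProductSpace

/-- The anisotropic integro-differential operator
`ℐu(x) = ∫_{S^{n-1} × ℝ} (u(x + rϑ) + u(x − rϑ) − 2u(x)) dμ(ϑ) dr / |r|^{1+2s}`. -/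
noncomputable def opI (n : ℕ) (s : ℝ)
    (μ : Measure (Metric.sphere (0 : EuclideanSpace ℝ (Fin n)) 1))
    (u : EuclideanSpace ℝ (Fin n) → ℝ) (x : EuclideanSpace ℝ (Fin n)) : ℝ :=
  ∫ p : Metric.sphere (0 : EuclideanSpace ℝ (Fin n)) 1 × ℝ,
    (u (x + p.2 • (p.1 : EuclideanSpace ℝ (Fin n))) +
      u (x - p.2 • (p.1 : EuclideanSpace ℝ (Fin n))) - 2 * u x) / |p.2| ^ (1 + 2 * s)
    ∂(μ.prod volume)

namespace OpIAux

/-- Tangent-line (concavity) bound for `t ↦ (1+t)^q`, `0 < q ≤ 1`. -/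
lemma rpow_tangent {q A h : ℝ} (hq0 : 0 ≤ q) (hq1 : q ≤ 1) (hA : 0 ≤ A)
    (hh : 0 ≤ 1 + A + h) :
    (1 + A + h) ^ q ≤ (1 + A) ^ q + q * (1 + A) ^ (q - 1) * h := by
  have hA1 : (0:ℝ) < 1 + A := by linarith
  have ht : -1 ≤ h / (1 + A) := by
    rw [le_div_iff₀ hA1]; linarith
  have key : (1 + h / (1 + A)) ^ q ≤ 1 + q * (h / (1 + A)) :=
    rpow_one_add_le_one_add_mul_self ht hq0 hq1
  have e1 : 1 + A + h = (1 + A) * (1 + h / (1 + A)) := by field_simp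
  have e2 : (1 + A) ^ (q - 1) = (1 + A) ^ q / (1 + A) := by
    rw [Real.rpow_sub hA1, Real.rpow_one]
  calc (1 + A + h) ^ q = ((1 + A) * (1 + h / (1 + A))) ^ q := by rw [← e1]
    _ = (1 + A) ^ q * (1 + h / (1 + A)) ^ q := Real.mul_rpow hA1.le (by linarith)
    _ ≤ (1 + A) ^ q * (1 + q * (h / (1 + A))) :=
        mul_le_mul_of_nonneg_left key (Real.rpow_nonneg hA1.le q)
    _ = (1 + A) ^ q + q * (1 + A) ^ (q - 1) * h := by rw [e2]; field_simp

variable {E : Type*} [NormedAddCommGroup E] [InnerProductSpace ℝ E]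

/-- Second-difference bound for the barrier `g x = (1+‖x‖²)^q`. -/
lemma secdiff_bound {q : ℝ} (hq0 : 0 < q) (hq1 : q ≤ 1) (z ϑ : E) (hϑ : ‖ϑ‖ = 1) (r : ℝ) :
    (1 + ‖z + r • ϑ‖ ^ 2) ^ q + (1 + ‖z - r • ϑ‖ ^ 2) ^ q - 2 * (1 + ‖z‖ ^ 2) ^ q
      ≤ min (2 * r ^ 2) (8 * |r| ^ (2 * q)) := by
  rcases eq_or_ne r 0 with rfl | hr
  · simp [Real.zero_rpow (by positivity : 2 * q ≠ 0)]
    linarith [Real.rpow_nonneg (by positivity : (0:ℝ) ≤ 1 + ‖z‖^2) q]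
  have hr2 : (0:ℝ) < r ^ 2 := by positivity
  set A : ℝ := ‖z‖ ^ 2 with hAdef
  have hA : 0 ≤ A := by positivity
  have hrϑ : ‖r • ϑ‖ ^ 2 = r ^ 2 := by
    rw [norm_smul, hϑ, mul_one, Real.norm_eq_abs, sq_abs]
  have h1 : ‖z + r • ϑ‖ ^ 2 = A + (2 * ⟪z, r • ϑ⟫ + r ^ 2) := by
    rw [norm_add_sq_real, hrϑ]; ring
  have h2 : ‖z - r • ϑ‖ ^ 2 = A + (-(2 * ⟪z, r • ϑ⟫) + r ^ 2) := by
    rw [norm_sub_sq_real, hrϑ]; ring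
  set h₁ : ℝ := 2 * ⟪z, r • ϑ⟫ + r ^ 2 with hd1
  set h₂ : ℝ := -(2 * ⟪z, r • ϑ⟫) + r ^ 2 with hd2
  have hsum : h₁ + h₂ = 2 * r ^ 2 := by rw [hd1, hd2]; ring
  clear_value h₁ h₂
  clear_value A
  have hh1 : 0 ≤ 1 + A + h₁ := by linarith [h1, sq_nonneg ‖z + r • ϑ‖]
  have hh2 : 0 ≤ 1 + A + h₂ := by linarith [h2, sq_nonneg ‖z - r • ϑ‖]
  have t1 := rpow_tangent hq0.le hq1 hA hh1
  have t2 := rpow_tangent hq0.le hq1 hA hh2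
  have key : (1 + ‖z + r • ϑ‖ ^ 2) ^ q + (1 + ‖z - r • ϑ‖ ^ 2) ^ q - 2 * (1 + A) ^ q
      ≤ q * (1 + A) ^ (q - 1) * (2 * r ^ 2) := by
    have e1 : (1:ℝ) + ‖z + r • ϑ‖ ^ 2 = 1 + A + h₁ := by rw [h1]; ring
    have e2 : (1:ℝ) + ‖z - r • ϑ‖ ^ 2 = 1 + A + h₂ := by rw [h2]; ring
    rw [e1, e2]
    calc (1 + A + h₁) ^ q + (1 + A + h₂) ^ q - 2 * (1 + A) ^ q
        ≤ ((1+A)^q + q*(1+A)^(q-1)*h₁) + ((1+A)^q + q*(1+A)^(q-1)*h₂) - 2*(1+A)^q := by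
          linarith
      _ = q * (1 + A) ^ (q - 1) * (h₁ + h₂) := by ring
      _ = q * (1 + A) ^ (q - 1) * (2 * r ^ 2) := by rw [hsum]
  have hpow_le_one : (1 + A) ^ (q - 1) ≤ 1 :=
    Real.rpow_le_one_of_one_le_of_nonpos (by linarith) (by linarith)
  have hpow_nonneg : 0 ≤ (1 + A) ^ (q - 1) := Real.rpow_nonneg (by linarith) _
  have habs : (r ^ 2) ^ q = |r| ^ (2 * q) := by
    rw [← sq_abs, ← Real.rpow_natCast |r| 2, ← Real.rpow_mul (abs_nonneg r)]
    norm_num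
  refine le_min ?_ ?_
  · -- ≤ 2 r²
    refine key.trans ?_
    have hmul : q * (1 + A) ^ (q - 1) ≤ 1 := mul_le_one₀ hq1 hpow_nonneg hpow_le_one
    calc q * (1 + A) ^ (q - 1) * (2 * r ^ 2) ≤ 1 * (2 * r ^ 2) :=
          mul_le_mul_of_nonneg_right hmul (by positivity)
      _ = 2 * r ^ 2 := one_mul _
  · -- ≤ 8 |r|^(2q)
    rw [← habs]
    rcases le_or_gt (r ^ 2) (1 + A) with hcase | hcase
    · -- small r: use the tangent bound
      have hmono : (1 + A) ^ (q - 1) ≤ (r ^ 2) ^ (q - 1) :=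
        Real.rpow_le_rpow_of_nonpos hr2 hcase (by linarith)
      have e3 : (r ^ 2) * (r ^ 2) ^ (q - 1) = (r ^ 2) ^ q := by
        calc (r ^ 2) * (r ^ 2) ^ (q - 1) = (r ^ 2) ^ (1:ℝ) * (r ^ 2) ^ (q - 1) := by
              rw [Real.rpow_one]
          _ = (r ^ 2) ^ (1 + (q - 1)) := (Real.rpow_add hr2 _ _).symm
          _ = (r ^ 2) ^ q := by ring_nf
      have step : q * (1 + A) ^ (q - 1) * (2 * r ^ 2) ≤ q * (r ^ 2) ^ (q - 1) * (2 * r ^ 2) := by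
        have := mul_le_mul_of_nonneg_right hmono (by positivity : (0:ℝ) ≤ 2 * r ^ 2)
        nlinarith [hq0.le]
      have e4 : q * (r ^ 2) ^ (q - 1) * (2 * r ^ 2) = 2 * q * ((r ^ 2) ^ q) := by
        rw [← e3]; ring
      have hnn : 0 ≤ (r ^ 2) ^ q := Real.rpow_nonneg hr2.le _
      refine key.trans (step.trans ?_)
      rw [e4]; nlinarith
    · -- large r: crude bound
      have hnorm1 : ‖z + r • ϑ‖ ≤ ‖z‖ + |r| := by
        calc ‖z + r • ϑ‖ ≤ ‖z‖ + ‖r • ϑ‖ := norm_add_le _ _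
          _ = ‖z‖ + |r| := by rw [norm_smul, hϑ, mul_one, Real.norm_eq_abs]
      have hnorm2 : ‖z - r • ϑ‖ ≤ ‖z‖ + |r| := by
        calc ‖z - r • ϑ‖ ≤ ‖z‖ + ‖r • ϑ‖ := norm_sub_le _ _
          _ = ‖z‖ + |r| := by rw [norm_smul, hϑ, mul_one, Real.norm_eq_abs]
      have hsq : (‖z‖ + |r|) ^ 2 ≤ 2 * A + 2 * r ^ 2 := by
        nlinarith [sq_nonneg (‖z‖ - |r|), sq_abs r]
      have hx1 : ‖z + r • ϑ‖ ^ 2 ≤ (‖z‖ + |r|) ^ 2 :=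
        pow_le_pow_left₀ (norm_nonneg _) hnorm1 2
      have hx2 : ‖z - r • ϑ‖ ^ 2 ≤ (‖z‖ + |r|) ^ 2 :=
        pow_le_pow_left₀ (norm_nonneg _) hnorm2 2
      have hb1 : 1 + ‖z + r • ϑ‖ ^ 2 ≤ 4 * r ^ 2 := by linarith
      have hb2 : 1 + ‖z - r • ϑ‖ ^ 2 ≤ 4 * r ^ 2 := by linarith
      have hterm1 : (1 + ‖z + r • ϑ‖ ^ 2) ^ q ≤ (4 * r ^ 2) ^ q :=
        Real.rpow_le_rpow (by positivity) hb1 hq0.le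
      have hterm2 : (1 + ‖z - r • ϑ‖ ^ 2) ^ q ≤ (4 * r ^ 2) ^ q :=
        Real.rpow_le_rpow (by positivity) hb2 hq0.le
      have hsplit : (4 * r ^ 2) ^ q = (4:ℝ) ^ q * (r ^ 2) ^ q :=
        Real.mul_rpow (by norm_num) hr2.le
      have h4q : (4:ℝ) ^ q ≤ 4 := by
        calc (4:ℝ) ^ q ≤ (4:ℝ) ^ (1:ℝ) :=
              Real.rpow_le_rpow_of_exponent_le (by norm_num) hq1
          _ = 4 := Real.rpow_one _
      have hnn : 0 ≤ (r ^ 2) ^ q := Real.rpow_nonneg hr2.le _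
      have hA_nn : 0 ≤ (1 + A) ^ q := Real.rpow_nonneg (by linarith) _
      have hfin : (4 * r ^ 2) ^ q ≤ 4 * (r ^ 2) ^ q := by
        rw [hsplit]; exact mul_le_mul_of_nonneg_right h4q hnn
      linarith



/-- The dominating profile function. -/
noncomputable def Phi (q s : ℝ) (r : ℝ) : ℝ :=
  min (2 * r ^ 2) (8 * |r| ^ (2 * q)) / |r| ^ (1 + 2 * s)

lemma Phi_nonneg (q s r : ℝ) : 0 ≤ Phi q s r :=
  div_nonneg (le_min (by positivity) (by positivity)) (by positivity)

lemma Phi_even (q s r : ℝ) : Phi q s (-r) = Phi q s r := by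
  simp [Phi, abs_neg, neg_sq]

lemma Phi_measurable (q s : ℝ) (hq : (0:ℝ) ≤ 2 * q) (hs : (0:ℝ) ≤ 1 + 2 * s) :
    Measurable (Phi q s) := by
  have c1 : Continuous fun r : ℝ => 2 * r ^ 2 := by continuity
  have c2 : Continuous fun r : ℝ => 8 * |r| ^ (2 * q) :=
    continuous_const.mul (continuous_abs.rpow_const fun x => Or.inr hq)
  have c3 : Continuous fun r : ℝ => |r| ^ (1 + 2 * s) :=
    continuous_abs.rpow_const fun x => Or.inr hs
  exact ((c1.min c2).measurable).div c3.measurable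

lemma integrableOn_Iic_of_even {Φ : ℝ → ℝ} (h : ∀ r, Φ (-r) = Φ r)
    (hi : IntegrableOn Φ (Set.Ici (0:ℝ))) : IntegrableOn Φ (Set.Iic (0:ℝ)) := by
  have h_map_neg : (volume.restrict (Set.Ici (0:ℝ))).map Neg.neg
      = volume.restrict (Set.Iic (0:ℝ)) := by
    conv => rhs; rw [← Measure.map_neg_eq_self (volume : Measure ℝ),
      measurableEmbedding_neg.restrict_map]
    simp
  rw [IntegrableOn, ← h_map_neg, measurableEmbedding_neg.integrable_map_iff]
  simpa [Function.comp_def, h, IntegrableOn] using hi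

lemma Phi_integrable {q s : ℝ} (hq0 : 0 < q) (hs0 : 0 < s) (hs1 : s < 1)
    (hqs : 2 * q < 2 * s) : Integrable (Phi q s) := by
  have hmeas := Phi_measurable q s (by linarith) (by linarith)
  have hIoc : IntegrableOn (Phi q s) (Set.Ioc (0:ℝ) 1) := by
    have hmaj : IntegrableOn (fun r : ℝ => 2 * r ^ (1 - 2 * s)) (Set.Ioc (0:ℝ) 1) := by
      have h0 : IntervalIntegrable (fun x : ℝ => x ^ (1 - 2 * s)) volume 0 1 :=
        intervalIntegral.intervalIntegrable_rpow' (by linarith)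
      rw [intervalIntegrable_iff_integrableOn_Ioc_of_le zero_le_one] at h0
      exact h0.const_mul 2
    refine hmaj.integrable.mono hmeas.aestronglyMeasurable.restrict ?_
    rw [ae_restrict_iff' measurableSet_Ioc]
    refine Filter.Eventually.of_forall fun r hr => ?_
    have hr0 : 0 < r := hr.1
    have habs : |r| = r := abs_of_pos hr0
    have key : Phi q s r ≤ 2 * r ^ (1 - 2 * s) := by
      have h1 : Phi q s r ≤ 2 * r ^ 2 / |r| ^ (1 + 2 * s) :=
        div_le_div_of_nonneg_right (min_le_left _ _) (by positivity)
      have h2 : 2 * r ^ 2 / |r| ^ (1 + 2 * s) = 2 * r ^ (1 - 2 * s) := by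
        rw [habs, ← Real.rpow_natCast r 2, mul_div_assoc, ← Real.rpow_sub hr0]
        have he : ((2:ℕ):ℝ) - (1 + 2 * s) = 1 - 2 * s := by push_cast; ring
        rw [he]
      rw [← h2]; exact h1
    have hrpos : (0:ℝ) ≤ 2 * r ^ (1 - 2 * s) := by positivity
    rw [Real.norm_eq_abs, Real.norm_eq_abs, abs_of_nonneg (Phi_nonneg q s r),
      abs_of_nonneg hrpos]
    exact key
  have hIoi : IntegrableOn (Phi q s) (Set.Ioi (1:ℝ)) := by
    have hmaj : IntegrableOn (fun r : ℝ => 8 * r ^ (2 * q - (1 + 2 * s))) (Set.Ioi (1:ℝ)) := by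
      have h0 := integrableOn_Ioi_rpow_of_lt (a := 2 * q - (1 + 2 * s)) (by linarith)
        (c := 1) one_pos
      exact h0.const_mul 8
    refine hmaj.integrable.mono hmeas.aestronglyMeasurable.restrict ?_
    rw [ae_restrict_iff' measurableSet_Ioi]
    refine Filter.Eventually.of_forall fun r hr => ?_
    have hr0 : (0:ℝ) < r := lt_trans one_pos hr
    have habs : |r| = r := abs_of_pos hr0
    have key : Phi q s r ≤ 8 * r ^ (2 * q - (1 + 2 * s)) := by
      have h1 : Phi q s r ≤ 8 * |r| ^ (2 * q) / |r| ^ (1 + 2 * s) :=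
        div_le_div_of_nonneg_right (min_le_right _ _) (by positivity)
      have h2 : 8 * |r| ^ (2 * q) / |r| ^ (1 + 2 * s) = 8 * r ^ (2 * q - (1 + 2 * s)) := by
        rw [habs, mul_div_assoc, ← Real.rpow_sub hr0]
      rw [← h2]; exact h1
    have hrpos : (0:ℝ) ≤ 8 * r ^ (2 * q - (1 + 2 * s)) := by positivity
    rw [Real.norm_eq_abs, Real.norm_eq_abs, abs_of_nonneg (Phi_nonneg q s r),
      abs_of_nonneg hrpos]
    exact key
  have hIci : IntegrableOn (Phi q s) (Set.Ici (0:ℝ)) := by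
    rw [integrableOn_Ici_iff_integrableOn_Ioi]
    rw [← Set.Ioc_union_Ioi_eq_Ioi (zero_le_one (α := ℝ))]
    exact hIoc.union hIoi
  have hIic : IntegrableOn (Phi q s) (Set.Iic (0:ℝ)) :=
    integrableOn_Iic_of_even (Phi_even q s) hIci
  rw [← integrableOn_univ, ← Set.Iic_union_Ioi (a := (0:ℝ))]
  refine hIic.union ?_
  exact ((integrableOn_Ici_iff_integrableOn_Ioi (f := Phi q s)).mp hIci)


lemma exists_max {E : Type*} [NormedAddCommGroup E] [InnerProductSpace ℝ E]
    [ProperSpace E] {u : E → ℝ} (hu : Continuous u)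
    {q K κ ε : ℝ} (hq0 : 0 < q) (hκq : κ < 2 * q) (hK : 0 ≤ K) (hκ0 : 0 ≤ κ) (hε : 0 < ε)
    (hgrowth : ∀ x, u x ≤ K * (1 + ‖x‖ ^ κ)) :
    ∃ z, ∀ x, u x - ε * (1 + ‖x‖ ^ 2) ^ q ≤ u z - ε * (1 + ‖z‖ ^ 2) ^ q := by
  set v : E → ℝ := fun x => u x - ε * (1 + ‖x‖ ^ 2) ^ q with hv_def
  have hv : Continuous v := by
    refine hu.sub (continuous_const.mul ?_)
    exact (continuous_const.add ((continuous_norm).pow 2)).rpow_const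
      fun x => Or.inr hq0.le
  set C0 : ℝ := 2 * K + |v 0| + 2 with hC0
  have htend : Filter.Tendsto (fun t : ℝ => t ^ (2 * q - κ)) Filter.atTop Filter.atTop :=
    tendsto_rpow_atTop (by linarith)
  obtain ⟨R, hR⟩ := Filter.eventually_atTop.mp
    ((htend.eventually_ge_atTop (C0 / ε)).and (Filter.eventually_ge_atTop 1))
  have hout : ∀ x : E, R ≤ ‖x‖ → v x ≤ v 0 - 1 := by
    intro x hx
    set t : ℝ := ‖x‖ with ht_def
    obtain ⟨h1, h2⟩ := hR t hx
    have ht0 : (0:ℝ) < t := lt_of_lt_of_le one_pos h2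
    have hup : u x ≤ K + K * t ^ κ := by
      have := hgrowth x; rw [← ht_def] at this; linarith [this, mul_add K 1 (t ^ κ)]
    have hlow : t ^ (2 * q) ≤ (1 + t ^ 2) ^ q := by
      have e : t ^ (2 * q) = (t ^ 2) ^ q := by
        rw [← Real.rpow_natCast t 2, ← Real.rpow_mul (norm_nonneg x)]
        norm_num
        rw [ht_def]
      rw [e]
      exact Real.rpow_le_rpow (by positivity) (by linarith) hq0.le
    have hts : t ^ (2 * q) = t ^ (2 * q - κ) * t ^ κ := by
      rw [← Real.rpow_add ht0]; ring_nf
    have htκ : (1:ℝ) ≤ t ^ κ := Real.one_le_rpow h2 hκ0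
    have hbig : C0 * t ^ κ ≤ ε * t ^ (2 * q) := by
      rw [hts, ← mul_assoc]
      have : C0 ≤ ε * t ^ (2 * q - κ) := by
        rw [← div_le_iff₀' hε] at *; exact h1
      exact mul_le_mul_of_nonneg_right this (by positivity)
    have hC0t : 2 * K + |v 0| + 2 ≤ C0 * t ^ κ := by
      have : C0 ≤ C0 * t ^ κ := le_mul_of_one_le_right (by positivity) htκ
      linarith
    have : v x ≤ K + K * t ^ κ - ε * t ^ (2 * q) := by
      have : ε * t ^ (2 * q) ≤ ε * (1 + t ^ 2) ^ q :=
        mul_le_mul_of_nonneg_left hlow hε.le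
      simp only [hv_def, ← ht_def]
      linarith
    have hKt : K ≤ K * t ^ κ := le_mul_of_one_le_right hK htκ
    have habs : -|v 0| ≤ v 0 := neg_abs_le _
    have hexp : C0 * t ^ κ = 2 * K * t ^ κ + (|v 0| + 2) * t ^ κ := by rw [hC0]; ring
    have hterm : |v 0| + 2 ≤ (|v 0| + 2) * t ^ κ :=
      le_mul_of_one_le_right (by positivity) htκ
    linarith
  set R' : ℝ := max R 1 with hR'
  have hcpt : IsCompact (Metric.closedBall (0:E) R') := isCompact_closedBall _ _
  have hne : (Metric.closedBall (0:E) R').Nonempty :=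
    ⟨0, Metric.mem_closedBall_self (le_trans zero_le_one (le_max_right _ _))⟩
  obtain ⟨z, hzmem, hzmax⟩ := hcpt.exists_isMaxOn hne hv.continuousOn
  refine ⟨z, fun x => ?_⟩
  by_cases hx : ‖x‖ ≤ R'
  · exact hzmax (by simpa [Metric.mem_closedBall, dist_zero_right] using hx)
  · push_neg at hx
    have h0mem : (0:E) ∈ Metric.closedBall (0:E) R' :=
      Metric.mem_closedBall_self (le_trans zero_le_one (le_max_right _ _))
    have := hout x (le_trans (le_max_left _ _) hx.le)
    have h0z : v 0 ≤ v z := hzmax h0mem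
    show v x ≤ v z
    linarith

end OpIAux

theorem opI_nonpos_of_upper_growth
    (n : ℕ) (hn : 1 ≤ n) (s : ℝ) (hs : s ∈ Set.Ioo (0 : ℝ) 1)
    (μ : Measure (Metric.sphere (0 : EuclideanSpace ℝ (Fin n)) 1)) [IsFiniteMeasure μ]
    (lam Λ : ℝ) (hlam : 0 < lam) (hΛ : 0 < Λ)
    (hnondeg : ∀ ν : Metric.sphere (0 : EuclideanSpace ℝ (Fin n)) 1,
      lam ≤ ∫ ϑ : Metric.sphere (0 : EuclideanSpace ℝ (Fin n)) 1,
        |⟪(ν : EuclideanSpace ℝ (Fin n)), (ϑ : EuclideanSpace ℝ (Fin n))⟫| ^ (2 * s) ∂μ)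
    (hμΛ : μ Set.univ ≤ ENNReal.ofReal Λ)
    (f : ℝ → ℝ) (hf_cont : Continuous f) (hf_mono : Monotone f)
    (u : EuclideanSpace ℝ (Fin n) → ℝ) (hu : ContDiff ℝ 2 u)
    (heq : ∀ x, opI n s μ u x = f (u x))
    (K κ : ℝ) (hK : 0 ≤ K) (hκ0 : 0 ≤ κ) (hκ : κ < 2 * s)
    (hgrowth : ∀ x, u x ≤ K * (1 + ‖x‖ ^ κ)) :
    ∀ x, opI n s μ u x ≤ 0 := by
  obtain ⟨hs0, hs1⟩ := hs
  intro x₀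
  set q : ℝ := (κ + 2 * s) / 4 with hq_def
  have hq0 : 0 < q := by rw [hq_def]; linarith
  have hq1 : q ≤ 1 := by rw [hq_def]; linarith
  have hκq : κ < 2 * q := by rw [hq_def]; linarith
  have hqs : 2 * q < 2 * s := by rw [hq_def]; linarith
  suffices hfin : f (u x₀) ≤ 0 by rw [heq x₀]; exact hfin
  have hΦint := OpIAux.Phi_integrable hq0 hs0 hs1 hqs
  have hΦprod : Integrable (fun p : Metric.sphere (0 : EuclideanSpace ℝ (Fin n)) 1 × ℝ => OpIAux.Phi q s p.2)
      (μ.prod volume) := by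
    have := (integrable_const (1:ℝ) (μ := μ)).smul_prod hΦint
    simpa using this
  set M : ℝ := ∫ p : Metric.sphere (0 : EuclideanSpace ℝ (Fin n)) 1 × ℝ, OpIAux.Phi q s p.2 ∂(μ.prod volume)
    with hM_def
  have hM : 0 ≤ M := integral_nonneg fun p => OpIAux.Phi_nonneg q s p.2
  have key : ∀ ε : ℝ, 0 < ε → f (u x₀ - ε * (1 + ‖x₀‖ ^ 2) ^ q) ≤ ε * M := by
    intro ε hε
    obtain ⟨z, hz⟩ := OpIAux.exists_max hu.continuous hq0 hκq hK hκ0 hε hgrowth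
    have hpt : ∀ p : Metric.sphere (0 : EuclideanSpace ℝ (Fin n)) 1 × ℝ,
        (u (z + p.2 • (p.1 : EuclideanSpace ℝ (Fin n))) + u (z - p.2 • (p.1 : EuclideanSpace ℝ (Fin n))) - 2 * u z) / |p.2| ^ (1 + 2 * s)
          ≤ ε * OpIAux.Phi q s p.2 := by
      intro p
      have hϑ : ‖(p.1 : EuclideanSpace ℝ (Fin n))‖ = 1 := by
        have := p.1.2
        rwa [mem_sphere_zero_iff_norm] at this
      have hsd := OpIAux.secdiff_bound hq0 hq1 z (p.1 : EuclideanSpace ℝ (Fin n)) hϑ p.2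
      have hcmp : u (z + p.2 • (p.1 : EuclideanSpace ℝ (Fin n))) + u (z - p.2 • (p.1 : EuclideanSpace ℝ (Fin n))) - 2 * u z
          ≤ ε * ((1 + ‖z + p.2 • (p.1 : EuclideanSpace ℝ (Fin n))‖ ^ 2) ^ q + (1 + ‖z - p.2 • (p.1 : EuclideanSpace ℝ (Fin n))‖ ^ 2) ^ q
              - 2 * (1 + ‖z‖ ^ 2) ^ q) := by
        have a1 := hz (z + p.2 • (p.1 : EuclideanSpace ℝ (Fin n)))
        have a2 := hz (z - p.2 • (p.1 : EuclideanSpace ℝ (Fin n)))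
        nlinarith [a1, a2]
      have hnum : u (z + p.2 • (p.1 : EuclideanSpace ℝ (Fin n))) + u (z - p.2 • (p.1 : EuclideanSpace ℝ (Fin n))) - 2 * u z
          ≤ ε * min (2 * p.2 ^ 2) (8 * |p.2| ^ (2 * q)) :=
        hcmp.trans (mul_le_mul_of_nonneg_left hsd hε.le)
      calc (u (z + p.2 • (p.1 : EuclideanSpace ℝ (Fin n))) + u (z - p.2 • (p.1 : EuclideanSpace ℝ (Fin n))) - 2 * u z) / |p.2| ^ (1 + 2 * s)
          ≤ (ε * min (2 * p.2 ^ 2) (8 * |p.2| ^ (2 * q))) / |p.2| ^ (1 + 2 * s) :=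
            div_le_div_of_nonneg_right hnum (by positivity)
        _ = ε * OpIAux.Phi q s p.2 := by rw [OpIAux.Phi, mul_div_assoc]
    have hopI : opI n s μ u z ≤ ε * M := by
      by_cases hint : Integrable (fun p : Metric.sphere (0 : EuclideanSpace ℝ (Fin n)) 1 × ℝ =>
          (u (z + p.2 • (p.1 : EuclideanSpace ℝ (Fin n))) + u (z - p.2 • (p.1 : EuclideanSpace ℝ (Fin n))) - 2 * u z) / |p.2| ^ (1 + 2 * s))
          (μ.prod volume)
      · have h1 : opI n s μ u z ≤ ∫ p : Metric.sphere (0 : EuclideanSpace ℝ (Fin n)) 1 × ℝ,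
            ε * OpIAux.Phi q s p.2 ∂(μ.prod volume) :=
          integral_mono hint (hΦprod.const_mul ε) hpt
        rwa [integral_const_mul] at h1
      · have h0 : opI n s μ u z = 0 := integral_undef hint
        rw [h0]
        positivity
    have huz : u x₀ - ε * (1 + ‖x₀‖ ^ 2) ^ q ≤ u z := by
      have h1 := hz x₀
      have h2 : 0 ≤ ε * (1 + ‖z‖ ^ 2) ^ q := by positivity
      linarith
    calc f (u x₀ - ε * (1 + ‖x₀‖ ^ 2) ^ q) ≤ f (u z) := hf_mono huz
      _ = opI n s μ u z := (heq z).symm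
      _ ≤ ε * M := hopI
  -- take ε → 0⁺
  have hlim1 : Filter.Tendsto (fun ε : ℝ => f (u x₀ - ε * (1 + ‖x₀‖ ^ 2) ^ q))
      (nhdsWithin 0 (Set.Ioi 0)) (nhds (f (u x₀))) := by
    have hc : Continuous fun ε : ℝ => u x₀ - ε * (1 + ‖x₀‖ ^ 2) ^ q := by continuity
    have := (hf_cont.tendsto (u x₀)).comp (hc.tendsto' 0 (u x₀) (by simp))
    exact this.mono_left nhdsWithin_le_nhds
  have hlim2 : Filter.Tendsto (fun ε : ℝ => ε * M) (nhdsWithin 0 (Set.Ioi 0)) (nhds 0) := by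
    have h0 : Filter.Tendsto (fun ε : ℝ => ε * M) (nhds 0) (nhds (0 * M)) :=
      Filter.Tendsto.mul_const M Filter.tendsto_id
    rw [zero_mul] at h0
    exact h0.mono_left nhdsWithin_le_nhds
  refine le_of_tendsto_of_tendsto hlim1 hlim2 ?_
  filter_upwards [self_mem_nhdsWithin] with ε hε
  exact key ε hε
end

section
/- Let f : ℝ → ℝ be continuous and nondecreasing, and let u ∈ C²(ℝⁿ) satisfy ℐu(x) = f(u(x)) for every x ∈ ℝⁿ. If u(x) ≥ −K(1 + |x|^κ) for all x ∈ ℝⁿ, for some K ≥ 0 and κ ∈ [0, 2s), then ℐu(x) ≥ 0 for every x ∈ ℝⁿ. -/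
open MeasureTheory
open scoped RealInnerProductSpace

open Set intervalIntegral
open scoped NNReal

section helpers


lemma rpow_tangent {γ X Y : ℝ} (hγ0 : 0 ≤ γ) (hγ1 : γ ≤ 1) (hX : 0 ≤ X) (hY : 0 < Y) :
    X ^ γ ≤ Y ^ γ + γ * Y ^ (γ - 1) * (X - Y) := by
  have hYne : Y ≠ 0 := hY.ne'
  have hdiv : 0 ≤ X / Y := div_nonneg hX hY.le
  have h1 : (X / Y) ^ γ ≤ 1 + γ * (X / Y - 1) := by
    have := rpow_one_add_le_one_add_mul_self (s := X / Y - 1) (by linarith) hγ0 hγ1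
    simpa using this
  have hYγ : (0:ℝ) < Y ^ γ := Real.rpow_pos_of_pos hY _
  have h2 := mul_le_mul_of_nonneg_left h1 hYγ.le
  have hL : Y ^ γ * (X / Y) ^ γ = X ^ γ := by
    rw [← Real.mul_rpow hY.le hdiv, mul_div_cancel₀ _ hYne]
  have hpow : Y ^ (γ - 1) = Y ^ γ / Y := by
    rw [Real.rpow_sub hY, Real.rpow_one]
  rw [hL] at h2
  calc X ^ γ ≤ Y ^ γ * (1 + γ * (X / Y - 1)) := h2
    _ = Y ^ γ + γ * (Y ^ γ / Y) * (X - Y) := by field_simp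
    _ = Y ^ γ + γ * Y ^ (γ - 1) * (X - Y) := by rw [hpow]

lemma rpow_subadd {γ A B : ℝ} (hγ0 : 0 ≤ γ) (hγ1 : γ ≤ 1) (hA : 0 ≤ A) (hB : 0 ≤ B) :
    (A + B) ^ γ ≤ A ^ γ + B ^ γ := by
  calc (A + B) ^ γ = ((A.toNNReal + B.toNNReal : ℝ≥0) : ℝ) ^ γ := by
        rw [NNReal.coe_add, Real.coe_toNNReal _ hA, Real.coe_toNNReal _ hB]
    _ = (((A.toNNReal + B.toNNReal) ^ γ : ℝ≥0) : ℝ) := by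
        rw [← NNReal.coe_rpow]
    _ ≤ ((A.toNNReal ^ γ + B.toNNReal ^ γ : ℝ≥0) : ℝ) := by
        exact_mod_cast NNReal.rpow_add_le_add_rpow _ _ hγ0 hγ1
    _ = A ^ γ + B ^ γ := by
        push_cast
        rw [Real.coe_toNNReal _ hA, Real.coe_toNNReal _ hB]

variable {E : Type*} [NormedAddCommGroup E] [InnerProductSpace ℝ E]

lemma penA {γ : ℝ} (hγ0 : 0 ≤ γ) (hγ1 : γ ≤ 1) (v w : E) :
    (1 + ‖v + w‖ ^ 2) ^ γ + (1 + ‖v - w‖ ^ 2) ^ γ - 2 * (1 + ‖v‖ ^ 2) ^ γ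
      ≤ 2 * γ * (1 + ‖v‖ ^ 2) ^ (γ - 1) * ‖w‖ ^ 2 := by
  have hY : (0:ℝ) < 1 + ‖v‖ ^ 2 := by positivity
  have hpar := parallelogram_law_with_norm ℝ v w
  have hpar' : ‖v + w‖ ^ 2 + ‖v - w‖ ^ 2 = 2 * ‖v‖ ^ 2 + 2 * ‖w‖ ^ 2 := by
    simp only [pow_two]; linarith
  have h1 := rpow_tangent (X := 1 + ‖v + w‖ ^ 2) hγ0 hγ1 (by positivity) hY
  have h2 := rpow_tangent (X := 1 + ‖v - w‖ ^ 2) hγ0 hγ1 (by positivity) hY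
  have e0 : ((1 + ‖v + w‖ ^ 2) - (1 + ‖v‖ ^ 2)) + ((1 + ‖v - w‖ ^ 2) - (1 + ‖v‖ ^ 2))
      = 2 * ‖w‖ ^ 2 := by linarith
  have e : γ * (1 + ‖v‖ ^ 2) ^ (γ - 1) * ((1 + ‖v + w‖ ^ 2) - (1 + ‖v‖ ^ 2))
      + γ * (1 + ‖v‖ ^ 2) ^ (γ - 1) * ((1 + ‖v - w‖ ^ 2) - (1 + ‖v‖ ^ 2))
      = 2 * γ * (1 + ‖v‖ ^ 2) ^ (γ - 1) * ‖w‖ ^ 2 := by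
    linear_combination (γ * (1 + ‖v‖ ^ 2) ^ (γ - 1)) * e0
  linarith

lemma penB {γ : ℝ} (hγ0 : 0 ≤ γ) (hγ1 : γ ≤ 1) (v w : E) :
    (1 + ‖v + w‖ ^ 2) ^ γ + (1 + ‖v - w‖ ^ 2) ^ γ - 2 * (1 + ‖v‖ ^ 2) ^ γ
      ≤ 2 * (1 + ‖v‖ ^ 2) ^ γ + 4 * (‖w‖ ^ 2) ^ γ := by
  have key : ∀ x : E, ‖x‖ ≤ ‖v‖ + ‖w‖ →
      (1 + ‖x‖ ^ 2) ^ γ ≤ 2 * (1 + ‖v‖ ^ 2) ^ γ + 2 * (‖w‖ ^ 2) ^ γ := by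
    intro x hx
    have h1 : 1 + ‖x‖ ^ 2 ≤ 2 * (1 + ‖v‖ ^ 2) + 2 * ‖w‖ ^ 2 := by
      nlinarith [sq_nonneg (‖v‖ - ‖w‖), norm_nonneg x, norm_nonneg v, norm_nonneg w]
    have h2 : (1 + ‖x‖ ^ 2) ^ γ ≤ (2 * (1 + ‖v‖ ^ 2) + 2 * ‖w‖ ^ 2) ^ γ :=
      Real.rpow_le_rpow (by positivity) h1 hγ0
    have h3 : (2 * (1 + ‖v‖ ^ 2) + 2 * ‖w‖ ^ 2) ^ γ
        ≤ (2 * (1 + ‖v‖ ^ 2)) ^ γ + (2 * ‖w‖ ^ 2) ^ γ :=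
      rpow_subadd hγ0 hγ1 (by positivity) (by positivity)
    have h4 : (2 * (1 + ‖v‖ ^ 2)) ^ γ = 2 ^ γ * (1 + ‖v‖ ^ 2) ^ γ :=
      Real.mul_rpow (by norm_num) (by positivity)
    have h5 : (2 * ‖w‖ ^ 2) ^ γ = 2 ^ γ * (‖w‖ ^ 2) ^ γ :=
      Real.mul_rpow (by norm_num) (by positivity)
    have h6 : (2:ℝ) ^ γ ≤ 2 := by
      calc (2:ℝ) ^ γ ≤ (2:ℝ) ^ (1:ℝ) := Real.rpow_le_rpow_of_exponent_le (by norm_num) hγ1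
        _ = 2 := Real.rpow_one 2
    have p1 : (0:ℝ) ≤ (1 + ‖v‖ ^ 2) ^ γ := Real.rpow_nonneg (by positivity) _
    have p2 : (0:ℝ) ≤ (‖w‖ ^ 2) ^ γ := Real.rpow_nonneg (by positivity) _
    nlinarith
  have k1 := key (v + w) (norm_add_le v w)
  have k2 := key (v - w) (norm_sub_le v w)
  have p1 : (0:ℝ) ≤ (1 + ‖v‖ ^ 2) ^ γ := Real.rpow_nonneg (by positivity) _
  linarith


end helpers


lemma integrable_comp_abs' {f : ℝ → ℝ} (hf : IntegrableOn f (Set.Ioi (0:ℝ))) :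
    Integrable (fun x => f |x|) (volume : Measure ℝ) := by
  have int_Ioi : IntegrableOn (fun x => f |x|) (Ioi (0:ℝ)) := by
    refine hf.congr_fun (fun x hx => ?_) measurableSet_Ioi
    rw [abs_eq_self.mpr (le_of_lt hx)]
  have int_Iic : IntegrableOn (fun x ↦ f |x|) (Iic (0:ℝ)) := by
    rw [← Measure.map_neg_eq_self (volume : Measure ℝ)]
    have m : MeasurableEmbedding fun x : ℝ => -x := (Homeomorph.neg ℝ).measurableEmbedding
    rw [m.integrableOn_map_iff]
    simp_rw [Function.comp_def, abs_neg, neg_preimage, neg_Iic, neg_zero]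
    exact Iff.mpr integrableOn_Ici_iff_integrableOn_Ioi int_Ioi
  have : IntegrableOn (fun x => f |x|) (Iic 0 ∪ Ioi 0) := int_Iic.union int_Ioi
  rwa [Iic_union_Ioi, integrableOn_univ] at this

lemma radial_est {s γ U : ℝ} (hs0 : 0 < s) (hs1 : s < 1) (hγ0 : 0 < γ) (hγs : γ < s)
    (hU : 1 ≤ U) :
    IntegrableOn
      (fun x : ℝ => (if x ≤ Real.sqrt U then 2*U^(γ-1)*x^2 else 2*U^γ + 4*(x^2)^γ) / x^(1+2*s))
      (Ioi (0:ℝ)) ∧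
    (∫ x in Ioi (0:ℝ),
        (if x ≤ Real.sqrt U then 2*U^(γ-1)*x^2 else 2*U^γ + 4*(x^2)^γ) / x^(1+2*s))
      ≤ 2/(2-2*s) + 1/s + 4/(2*s-2*γ) := by
  have hU0 : (0:ℝ) < U := by linarith
  set T := Real.sqrt U with hTdef
  have hT1 : (1:ℝ) ≤ T := by
    rw [hTdef, show (1:ℝ) = Real.sqrt 1 by rw [Real.sqrt_one]]
    exact Real.sqrt_le_sqrt hU
  have hT0 : (0:ℝ) < T := lt_of_lt_of_le one_pos hT1
  set h : ℝ → ℝ :=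
    fun x => (if x ≤ T then 2*U^(γ-1)*x^2 else 2*U^γ + 4*(x^2)^γ) / x^(1+2*s) with hdef
  have he1 : (-1:ℝ) < 1 - 2*s := by linarith
  have he2 : (-(1+2*s) : ℝ) < -1 := by linarith
  have he3 : (2*γ - (1+2*s) : ℝ) < -1 := by linarith
  have eq1 : EqOn h (fun x => 2*U^(γ-1) * x^(1-2*s)) (Ioc (0:ℝ) T) := by
    intro x hx
    have hx0 : (0:ℝ) < x := hx.1
    simp only [hdef, if_pos hx.2]
    rw [show (1 - 2*s : ℝ) = 2 - (1+2*s) by ring, Real.rpow_sub hx0, Real.rpow_two]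
    ring
  have eq2 : EqOn h (fun x => 2*U^γ * x^(-(1+2*s)) + 4 * x^(2*γ-(1+2*s))) (Ioi T) := by
    intro x hx
    have hx0 : (0:ℝ) < x := lt_trans hT0 hx
    have hxpow : ((x^2 : ℝ))^γ = x^(2*γ) := by
      rw [← Real.rpow_two, ← Real.rpow_mul hx0.le]
    simp only [hdef, if_neg (not_le.mpr (mem_Ioi.mp hx))]
    rw [hxpow, Real.rpow_sub hx0, Real.rpow_neg hx0.le, add_div]
    ring
  have int1 : IntegrableOn (fun x : ℝ => 2*U^(γ-1) * x^(1-2*s)) (Ioc (0:ℝ) T) := by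
    have := (intervalIntegrable_rpow' (a := 0) (b := T) he1).const_mul (2*U^(γ-1))
    exact (intervalIntegrable_iff_integrableOn_Ioc_of_le hT0.le).mp this
  have int2 : IntegrableOn (fun x : ℝ => 2*U^γ * x^(-(1+2*s)) + 4 * x^(2*γ-(1+2*s)))
      (Ioi T) :=
    ((integrableOn_Ioi_rpow_of_lt he2 hT0).const_mul _).add
      ((integrableOn_Ioi_rpow_of_lt he3 hT0).const_mul _)
  have hint1 : IntegrableOn h (Ioc (0:ℝ) T) :=
    int1.congr_fun (fun x hx => (eq1 hx).symm) measurableSet_Ioc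
  have hint2 : IntegrableOn h (Ioi T) :=
    int2.congr_fun (fun x hx => (eq2 hx).symm) measurableSet_Ioi
  have hunion : Ioc (0:ℝ) T ∪ Ioi T = Ioi 0 := Ioc_union_Ioi_eq_Ioi hT0.le
  have hTpow : ∀ q : ℝ, T ^ q = U ^ (q / 2) := by
    intro q
    rw [hTdef, Real.sqrt_eq_rpow, ← Real.rpow_mul hU0.le]
    ring_nf
  have hA0 : (0:ℝ) ≤ U ^ (γ - s) := Real.rpow_nonneg hU0.le _
  have hA1 : U ^ (γ - s) ≤ 1 := Real.rpow_le_one_of_one_le_of_nonpos hU (by linarith)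
  constructor
  · rw [← hunion]; exact hint1.union hint2
  · have hsplit : (∫ x in Ioi (0:ℝ), h x) = (∫ x in Ioc (0:ℝ) T, h x) + ∫ x in Ioi T, h x := by
      rw [← hunion, setIntegral_union (Ioc_disjoint_Ioi le_rfl) measurableSet_Ioi hint1 hint2]
    have hI1 : (∫ x in Ioc (0:ℝ) T, h x) ≤ 2/(2-2*s) := by
      rw [setIntegral_congr_fun measurableSet_Ioc eq1, MeasureTheory.integral_const_mul,
        ← integral_of_le hT0.le]
      rw [show (∫ x in (0:ℝ)..T, x ^ (1-2*s)) = (T ^ (1-2*s+1) - 0 ^ (1-2*s+1)) / (1-2*s+1)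
        from integral_rpow (Or.inl he1)]
      have e : 2*U^(γ-1) * ((T ^ (1-2*s+1) - 0 ^ (1-2*s+1)) / (1-2*s+1))
          = 2 * (U^(γ-1) * U^((2-2*s)/2)) / (2-2*s) := by
        rw [Real.zero_rpow (by intro hcon; nlinarith : (1-2*s+1:ℝ) ≠ 0),
          show (1-2*s+1:ℝ) = 2-2*s by ring, hTpow]
        ring
      rw [e, ← Real.rpow_add hU0, show (γ-1+(2-2*s)/2 : ℝ) = γ - s by ring]
      have hden : (0:ℝ) < 2-2*s := by linarith
      gcongr
      linarith
    have hI2 : (∫ x in Ioi T, h x) ≤ 1/s + 4/(2*s-2*γ) := by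
      rw [setIntegral_congr_fun measurableSet_Ioi eq2,
        integral_add ((integrableOn_Ioi_rpow_of_lt he2 hT0).const_mul _)
          ((integrableOn_Ioi_rpow_of_lt he3 hT0).const_mul _),
        MeasureTheory.integral_const_mul, MeasureTheory.integral_const_mul,
        integral_Ioi_rpow_of_lt he2 hT0, integral_Ioi_rpow_of_lt he3 hT0]
      have e1 : 2*U^γ * (-T ^ (-(1+2*s)+1) / (-(1+2*s)+1)) = U^γ * U^(-s) / s := by
        rw [show (-(1+2*s)+1:ℝ) = -(2*s) by ring, hTpow,
          show (-(2*s)/2 : ℝ) = -s by ring, neg_div_neg_eq]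
        ring
      have e2 : 4 * (-T ^ (2*γ-(1+2*s)+1) / (2*γ-(1+2*s)+1)) = 4 * U^(γ-s) / (2*s-2*γ) := by
        rw [show (2*γ-(1+2*s)+1:ℝ) = -(2*s-2*γ) by ring, hTpow,
          show (-(2*s-2*γ)/2 : ℝ) = γ-s by ring, neg_div_neg_eq]
        ring
      rw [e1, e2, ← Real.rpow_add hU0, show (γ + -s : ℝ) = γ - s by ring]
      have hden1 : (0:ℝ) < s := hs0
      have hden2 : (0:ℝ) < 2*s-2*γ := by linarith
      have b1 : U^(γ-s) / s ≤ 1/s := by gcongr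
      have b2 : 4 * U^(γ-s) / (2*s-2*γ) ≤ 4/(2*s-2*γ) := by gcongr; linarith
      linarith
    rw [hsplit]
    linarith


set_option maxHeartbeats 2000000 in
theorem opI_nonneg_of_lower_growth
    (n : ℕ) (hn : 1 ≤ n) (s : ℝ) (hs : s ∈ Set.Ioo (0 : ℝ) 1)
    (μ : Measure (Metric.sphere (0 : EuclideanSpace ℝ (Fin n)) 1)) [IsFiniteMeasure μ]
    (lam Λ : ℝ) (hlam : 0 < lam) (hΛ : 0 < Λ)
    (hnondeg : ∀ ν : Metric.sphere (0 : EuclideanSpace ℝ (Fin n)) 1,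
      lam ≤ ∫ ϑ : Metric.sphere (0 : EuclideanSpace ℝ (Fin n)) 1,
        |⟪(ν : EuclideanSpace ℝ (Fin n)), (ϑ : EuclideanSpace ℝ (Fin n))⟫| ^ (2 * s) ∂μ)
    (hμΛ : μ Set.univ ≤ ENNReal.ofReal Λ)
    (f : ℝ → ℝ) (hf_cont : Continuous f) (hf_mono : Monotone f)
    (u : EuclideanSpace ℝ (Fin n) → ℝ) (hu : ContDiff ℝ 2 u)
    (heq : ∀ x, opI n s μ u x = f (u x))
    (K κ : ℝ) (hK : 0 ≤ K) (hκ0 : 0 ≤ κ) (hκ : κ < 2 * s)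
    (hgrowth : ∀ x, -(K * (1 + ‖x‖ ^ κ)) ≤ u x) :
    ∀ x, 0 ≤ opI n s μ u x := by
  obtain ⟨hs0, hs1⟩ := hs
  intro x₀
  rw [heq x₀]
  set γ : ℝ := (κ + 2*s)/4 with hγdef
  have hγ0 : 0 < γ := by rw [hγdef]; linarith
  have hγs : γ < s := by rw [hγdef]; linarith
  have hγ1 : γ ≤ 1 := by linarith
  have hκγ : κ < 2*γ - κ + κ := by rw [hγdef]; linarith
  have hκγ' : 0 < 2*γ - κ := by rw [hγdef]; linarith
  set C₀ : ℝ := 2/(2-2*s) + 1/s + 4/(2*s-2*γ) with hC₀def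
  have hden1 : (0:ℝ) < 2-2*s := by linarith
  have hden2 : (0:ℝ) < 2*s-2*γ := by linarith
  have hC₀ : 0 < C₀ := by
    rw [hC₀def]
    have a1 : (0:ℝ) < 2/(2-2*s) := by positivity
    have a2 : (0:ℝ) < 1/s := by positivity
    have a3 : (0:ℝ) < 4/(2*s-2*γ) := by positivity
    linarith
  set C : ℝ := Λ * (2*C₀) with hCdef
  have hC : 0 < C := by rw [hCdef]; positivity
  -- reduce to: for all δ > 0, f (u x₀) ≥ -(δ * C)
  suffices key : ∀ δ : ℝ, 0 < δ → -(δ*C) ≤ f (u x₀) by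
    by_contra hneg
    push_neg at hneg
    have hpos : 0 < -(f (u x₀)) := by linarith
    have h1 := key (-(f (u x₀))/(2*C)) (by positivity)
    have h2 : -(-(f (u x₀))/(2*C) * C) = f (u x₀)/2 := by
      field_simp
    rw [h2] at h1
    linarith
  intro δ hδ
  -- the penalization
  set pen : EuclideanSpace ℝ (Fin n) → ℝ := fun y => (1 + ‖y - x₀‖^2)^γ with hpendef
  have hpen_cont : Continuous pen := by
    apply Continuous.rpow_const
    · exact continuous_const.add ((continuous_id.sub continuous_const).norm.pow 2)
    · exact fun _ => Or.inr hγ0.le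
  have hpen1 : ∀ y, 1 ≤ pen y := by
    intro y
    apply Real.one_le_rpow _ hγ0.le
    nlinarith [sq_nonneg ‖y - x₀‖]
  -- coercivity of u + δ pen
  have hcoer : ∀ᶠ y in Filter.cocompact (EuclideanSpace ℝ (Fin n)),
      u x₀ + δ * pen x₀ ≤ u y + δ * pen y := by
    have hP : (0:ℝ) < 2^(2*γ) := Real.rpow_pos_of_pos two_pos _
    set δ' : ℝ := δ / 2^(2*γ) with hδ'def
    have hδ' : 0 < δ' := by positivity
    have hm : Filter.Tendsto (fun τ : ℝ => δ' * τ^(2*γ-κ)) Filter.atTop Filter.atTop :=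
      (tendsto_rpow_atTop hκγ').const_mul_atTop hδ'
    have hev : ∀ᶠ τ : ℝ in Filter.atTop,
        (u x₀ + δ * pen x₀ ≤ δ*(τ - ‖x₀‖)^(2*γ) - K*(1+τ^κ)) ∧ ‖x₀‖ ≤ τ := by
      filter_upwards [Filter.eventually_ge_atTop (1:ℝ),
        Filter.eventually_ge_atTop (2*‖x₀‖),
        hm.eventually_ge_atTop (max K (u x₀ + δ * pen x₀ + 2*K))] with τ h1 h2 h3
      have hc0 : (0:ℝ) ≤ ‖x₀‖ := norm_nonneg _
      have hτ0 : (0:ℝ) < τ := by linarith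
      constructor
      · -- main coercivity inequality
        have e1 : (τ/2)^(2*γ) ≤ (τ-‖x₀‖)^(2*γ) :=
          Real.rpow_le_rpow (by linarith) (by linarith) (by linarith)
        have e2 : (τ/2)^(2*γ) = τ^(2*γ)/2^(2*γ) := Real.div_rpow hτ0.le (le_of_lt two_pos) (2*γ)
        have e3 : τ^(2*γ-κ+κ) = τ^(2*γ-κ) * τ^κ := Real.rpow_add hτ0 _ _
        have e3' : τ^(2*γ) = τ^(2*γ-κ) * τ^κ := by
          rw [← e3]; norm_num
        have e4 : 1 ≤ τ^κ := Real.one_le_rpow h1 hκ0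
        have e5 : K ≤ δ' * τ^(2*γ-κ) := le_trans (le_max_left _ _) h3
        have e6 : u x₀ + δ * pen x₀ + 2*K ≤ δ' * τ^(2*γ-κ) :=
          le_trans (le_max_right _ _) h3
        have step1 : δ' * τ^(2*γ) ≤ δ * (τ-‖x₀‖)^(2*γ) := by
          have h := mul_le_mul_of_nonneg_left e1 hδ.le
          have eq : δ' * τ^(2*γ) = δ * (τ/2)^(2*γ) := by
            rw [e2, hδ'def]; field_simp
          linarith [eq ▸ h]
        have step2 : δ' * τ^(2*γ-κ) - K ≤ δ' * τ^(2*γ) - K * τ^κ := by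
          have hfac : 0 ≤ δ' * τ^(2*γ-κ) - K := by linarith
          have h := mul_le_mul_of_nonneg_right e4 hfac
          have eq : τ^κ * (δ' * τ^(2*γ-κ) - K) = δ' * τ^(2*γ) - K * τ^κ := by
            rw [e3']; ring
          linarith [eq ▸ h]
        linarith
      · linarith
    refine (tendsto_norm_cocompact_atTop.eventually hev).mono (fun y hy => ?_)
    obtain ⟨hy1, hy2⟩ := hy
    have n1 : ‖y‖ - ‖x₀‖ ≤ ‖y - x₀‖ := norm_sub_norm_le y x₀
    have n2 : (‖y‖-‖x₀‖)^(2*γ) ≤ ‖y-x₀‖^(2*γ) :=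
      Real.rpow_le_rpow (by linarith) n1 (by linarith)
    have n3 : ‖y-x₀‖^(2*γ) = (‖y-x₀‖^2)^γ := by
      rw [← Real.rpow_natCast ‖y-x₀‖ 2, ← Real.rpow_mul (norm_nonneg _)]
      norm_num
    have n4 : (‖y-x₀‖^2)^γ ≤ pen y :=
      Real.rpow_le_rpow (sq_nonneg _) (by linarith) hγ0.le
    have n5 : (‖y‖-‖x₀‖)^(2*γ) ≤ pen y := by
      rw [n3] at n2; linarith
    have n6 := mul_le_mul_of_nonneg_left n5 hδ.le
    have n7 := hgrowth y
    linarith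
  -- existence of a global minimizer of u + δ pen
  obtain ⟨z, hz⟩ := (hu.continuous.add (continuous_const.mul hpen_cont)).exists_forall_le' x₀ hcoer
  have hzle : u z ≤ u x₀ := by
    have h1 : u z + δ * pen z ≤ u x₀ + δ * pen x₀ := hz x₀
    have hpx : pen x₀ = 1 := by
      rw [hpendef]; simp [Real.one_rpow]
    have h2 := mul_le_mul_of_nonneg_left (hpen1 z) hδ.le
    rw [hpx] at h1
    linarith
  -- the dominating radial function
  have hU : (1:ℝ) ≤ 1 + ‖z - x₀‖^2 := by nlinarith [sq_nonneg ‖z - x₀‖]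
  obtain ⟨hgint, hgbound⟩ := radial_est hs0 hs1 hγ0 hγs hU
  set V : ℝ := 1 + ‖z - x₀‖^2 with hVdef
  set g : ℝ → ℝ := fun r =>
    (if |r| ≤ Real.sqrt V then 2*V^(γ-1)*r^2 else 2*V^γ + 4*(r^2)^γ) / |r|^(1+2*s) with hgdef
  have hg_abs : g = fun r =>
      (fun x : ℝ => (if x ≤ Real.sqrt V then 2*V^(γ-1)*x^2 else 2*V^γ + 4*(x^2)^γ) / x^(1+2*s))
        |r| := by
    funext r; simp only [hgdef, sq_abs]
  have hgInt : Integrable g := by rw [hg_abs]; exact integrable_comp_abs' hgint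
  have hgnonneg : ∀ r, 0 ≤ g r := by
    intro r
    rw [hgdef]
    apply div_nonneg _ (Real.rpow_nonneg (abs_nonneg r) _)
    split_ifs
    · have := Real.rpow_nonneg (by positivity : (0:ℝ) ≤ V) (γ-1); positivity
    · have h1 := Real.rpow_nonneg (by positivity : (0:ℝ) ≤ V) γ
      have h2 := Real.rpow_nonneg (sq_nonneg r) γ
      linarith
  have hgval : ∫ r, g r ≤ 2*C₀ := by
    rw [hg_abs, integral_comp_abs]
    rw [hC₀def]; linarith
  have hgIval : 0 ≤ ∫ r, g r := integral_nonneg hgnonneg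
  -- measurability
  have hgmeas : Measurable g := by
    rw [hgdef]
    apply Measurable.div
    · apply Measurable.ite (measurableSet_le measurable_abs measurable_const)
      · exact (continuous_const.mul ((continuous_pow 2))).measurable
      · apply Continuous.measurable
        exact continuous_const.add (continuous_const.mul
          ((continuous_pow 2).rpow_const (fun _ => Or.inr hγ0.le)))
    · exact (continuous_abs.rpow_const (fun _ => Or.inr (by positivity))).measurable
  -- integrability of the dominating function on the product
  have hGmeas : AEStronglyMeasurable
      (fun p : Metric.sphere (0 : EuclideanSpace ℝ (Fin n)) 1 × ℝ => δ * g p.2)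
      (μ.prod volume) :=
    ((hgmeas.comp measurable_snd).const_mul δ).aestronglyMeasurable
  have hGint : Integrable
      (fun p : Metric.sphere (0 : EuclideanSpace ℝ (Fin n)) 1 × ℝ => δ * g p.2)
      (μ.prod volume) := by
    refine (integrable_prod_iff hGmeas).mpr ⟨?_, ?_⟩
    · exact Filter.Eventually.of_forall (fun ϑ => hgInt.const_mul δ)
    · exact integrable_const (∫ y : ℝ, ‖δ * g y‖)
  -- value bound for the dominating integral
  have hμreal : (μ Set.univ).toReal ≤ Λ := ENNReal.toReal_le_of_le_ofReal hΛ.le hμΛ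
  have hGval : ∫ p : Metric.sphere (0 : EuclideanSpace ℝ (Fin n)) 1 × ℝ,
      δ * g p.2 ∂(μ.prod volume) ≤ δ * C := by
    rw [integral_prod _ hGint]
    simp only [MeasureTheory.integral_const_mul]
    rw [MeasureTheory.integral_const, smul_eq_mul]
    rw [hCdef]
    have : (μ Set.univ).toReal * ∫ r, g r ≤ Λ * (2*C₀) :=
      mul_le_mul hμreal hgval hgIval hΛ.le
    calc δ * ((μ Set.univ).toReal * ∫ r, g r) ≤ δ * (Λ * (2*C₀)) :=
          mul_le_mul_of_nonneg_left this hδ.le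
      _ = δ * (Λ * (2*C₀)) := rfl
  -- pointwise lower bound for the integrand of opI at z
  have hpoint : ∀ p : Metric.sphere (0 : EuclideanSpace ℝ (Fin n)) 1 × ℝ,
      -(δ * g p.2) ≤ (u (z + p.2 • (p.1 : EuclideanSpace ℝ (Fin n))) +
        u (z - p.2 • (p.1 : EuclideanSpace ℝ (Fin n))) - 2 * u z) / |p.2| ^ (1 + 2 * s) := by
    rintro ⟨ϑ, r⟩
    dsimp only
    by_cases hr : r = 0
    · subst hr
      rw [hgdef]
      simp only [abs_zero, Real.zero_rpow (by positivity : (1+2*s:ℝ) ≠ 0), div_zero,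
        mul_zero, neg_zero, le_refl]
    · have hr0 : 0 < |r| := abs_pos.mpr hr
      have hD : 0 < |r|^(1+2*s) := Real.rpow_pos_of_pos hr0 _
      have hϑ : ‖(ϑ : EuclideanSpace ℝ (Fin n))‖ = 1 := norm_eq_of_mem_sphere ϑ
      set w : EuclideanSpace ℝ (Fin n) := r • (ϑ : EuclideanSpace ℝ (Fin n)) with hwdef
      have hw : ‖w‖ = |r| := by
        rw [hwdef, norm_smul, hϑ, mul_one, Real.norm_eq_abs]
      have hw2 : ‖w‖^2 = r^2 := by rw [hw, sq_abs]
      have hv1 : z + w - x₀ = (z - x₀) + w := by abel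
      have hv2 : z - w - x₀ = (z - x₀) - w := by abel
      have hVnn : (0:ℝ) ≤ V := by rw [hVdef]; positivity
      -- second difference bound for pen
      have hbr : pen (z+w) + pen (z-w) - 2 * pen z
          ≤ (if |r| ≤ Real.sqrt V then 2*V^(γ-1)*r^2 else 2*V^γ + 4*(r^2)^γ) := by
        have hpenform : pen (z+w) = (1 + ‖(z - x₀) + w‖^2)^γ := by
          simp only [hpendef]; rw [hv1]
        have hpenform2 : pen (z-w) = (1 + ‖(z - x₀) - w‖^2)^γ := by
          simp only [hpendef]; rw [hv2]
        have hpenform3 : pen z = (1 + ‖z - x₀‖^2)^γ := by simp only [hpendef]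
        rw [hpenform, hpenform2, hpenform3]
        split_ifs with hcase
        · have hA := penA hγ0.le hγ1 (z - x₀) w
          rw [hw2] at hA
          have hpos : (0:ℝ) ≤ (1 + ‖z - x₀‖^2)^(γ-1) := Real.rpow_nonneg (by positivity) _
          have : 2*γ*(1 + ‖z - x₀‖^2)^(γ-1)*r^2 ≤ 2*(1 + ‖z - x₀‖^2)^(γ-1)*r^2 := by
            nlinarith [mul_nonneg (mul_nonneg (by linarith : (0:ℝ) ≤ 1 - γ) hpos) (sq_nonneg r)]
          rw [hVdef]
          linarith
        · have hB := penB hγ0.le hγ1 (z - x₀) w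
          rw [hw2] at hB
          rw [hVdef]
          linarith
      -- numerator bound from minimality
      have d1 : u z + δ * pen z ≤ u (z + w) + δ * pen (z + w) := hz (z + w)
      have d2 : u z + δ * pen z ≤ u (z - w) + δ * pen (z - w) := hz (z - w)
      have hnum : -(δ * (if |r| ≤ Real.sqrt V then 2*V^(γ-1)*r^2 else 2*V^γ + 4*(r^2)^γ))
          ≤ u (z+w) + u (z-w) - 2*u z := by
        have h := mul_le_mul_of_nonneg_left hbr hδ.le
        linarith
      -- divide by the positive denominator
      rw [hgdef]
      dsimp only
      rw [show -(δ * ((if |r| ≤ Real.sqrt V then 2*V^(γ-1)*r^2 else 2*V^γ + 4*(r^2)^γ)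
          / |r|^(1+2*s)))
        = (-(δ * (if |r| ≤ Real.sqrt V then 2*V^(γ-1)*r^2 else 2*V^γ + 4*(r^2)^γ)))
          / |r|^(1+2*s) by ring]
      have h0 : 0 ≤ ((u (z+w) + u (z-w) - 2*u z) -
          (-(δ * (if |r| ≤ Real.sqrt V then 2*V^(γ-1)*r^2 else 2*V^γ + 4*(r^2)^γ))))
          / |r|^(1+2*s) := div_nonneg (by linarith) hD.le
      have hexp : (u (z+w) + u (z-w) - 2*u z) / |r|^(1+2*s)
          - (-(δ * (if |r| ≤ Real.sqrt V then 2*V^(γ-1)*r^2 else 2*V^γ + 4*(r^2)^γ)))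
            / |r|^(1+2*s)
          = ((u (z+w) + u (z-w) - 2*u z) -
            (-(δ * (if |r| ≤ Real.sqrt V then 2*V^(γ-1)*r^2 else 2*V^γ + 4*(r^2)^γ))))
            / |r|^(1+2*s) := by ring
      linarith [hexp ▸ h0]
  -- conclude: opI u z ≥ -(δ C)
  have hfz : -(δ * C) ≤ f (u z) := by
    rw [← heq z]
    rw [opI]
    by_cases hF : Integrable
        (fun p : Metric.sphere (0 : EuclideanSpace ℝ (Fin n)) 1 × ℝ =>
          (u (z + p.2 • (p.1 : EuclideanSpace ℝ (Fin n))) +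
            u (z - p.2 • (p.1 : EuclideanSpace ℝ (Fin n))) - 2 * u z) / |p.2| ^ (1 + 2 * s))
        (μ.prod volume)
    · have hmono := integral_mono hGint.neg hF (fun p => hpoint p)
      simp only [Pi.neg_apply, MeasureTheory.integral_neg] at hmono
      linarith
    · rw [integral_undef hF]
      have : 0 ≤ δ * C := by positivity
      linarith
  have hfmono := hf_mono hzle
  linarith
end

section
/- Let γ ∈ (0, 2s). Then for every x ∈ ℝⁿ with |x| ≥ 1 one has ∫_{S^{n-1} × ℝ} (|x + ϑr|^γ + |x − ϑr|^γ − 2|x|^γ) dμ(ϑ) dr / |r|^{1+2s} ≤ C |x|^{γ−2s}, where C > 0 depends only on n, s, Λ and γ. -/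
open MeasureTheory Set Real

/-- Lipschitz bound for `t ↦ t^β` on `[m, ∞)` when `β ≤ 1`. -/
lemma rpow_lip {β m : ℝ} (hm : 0 < m) (hβ : β ≤ 1) {t c : ℝ} (ht : m ≤ t) (hc : m ≤ c) :
    |t ^ β - c ^ β| ≤ |β| * m ^ (β - 1) * |t - c| := by
  have h := Convex.norm_image_sub_le_of_norm_hasDerivWithin_le
    (f := fun x : ℝ => x ^ β) (f' := fun x : ℝ => β * x ^ (β - 1)) (s := Set.Ici m)
    (C := |β| * m ^ (β - 1))
    (fun x hx => (Real.hasDerivAt_rpow_const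
      (Or.inl (ne_of_gt (lt_of_lt_of_le hm hx)))).hasDerivWithinAt)
    (fun x hx => by
      have hx0 : (0:ℝ) < x := lt_of_lt_of_le hm hx
      have h1 : x ^ (β - 1) ≤ m ^ (β - 1) :=
        Real.rpow_le_rpow_of_nonpos hm hx (by linarith)
      have h2 : (0:ℝ) ≤ x ^ (β - 1) := Real.rpow_nonneg hx0.le _
      calc ‖β * x ^ (β - 1)‖ = |β| * x ^ (β - 1) := by
            rw [norm_mul, Real.norm_eq_abs, Real.norm_eq_abs, abs_of_nonneg h2]
        _ ≤ |β| * m ^ (β - 1) := mul_le_mul_of_nonneg_left h1 (abs_nonneg _))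
    (convex_Ici m) hc ht
  simpa [Real.norm_eq_abs] using h

/-- Second-order Taylor bound for `t ↦ t^γ` on `[m, ∞)`, `0 < γ < 2`. -/
lemma rpow_taylor2 {γ m : ℝ} (hm : 0 < m) (hγ0 : 0 < γ) (hγ2 : γ < 2)
    {t c : ℝ} (ht : m ≤ t) (hc : m ≤ c) :
    |t ^ γ - c ^ γ - γ * c ^ (γ - 1) * (t - c)| ≤ γ * m ^ (γ - 2) * (t - c) ^ 2 := by
  have hsub : Set.uIcc c t ⊆ Set.Ici m := by
    intro x hx
    rcases Set.mem_uIcc.1 hx with ⟨h1, _⟩ | ⟨h1, _⟩ <;> exact le_trans (by assumption) h1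
  have hmem : ∀ x ∈ Set.uIcc c t, |x - c| ≤ |t - c| := by
    intro x hx
    rcases Set.mem_uIcc.1 hx with ⟨h1, h2⟩ | ⟨h1, h2⟩ <;>
      rw [abs_sub_le_iff] <;> constructor <;>
      · rw [abs_sub_comm t c] <;> try skip
        first
          | linarith [le_abs_self (t - c), neg_abs_le (t - c)]
          | linarith [le_abs_self (c - t), neg_abs_le (c - t)]
  have key := Convex.norm_image_sub_le_of_norm_hasDerivWithin_le
    (f := fun x : ℝ => x ^ γ - γ * c ^ (γ - 1) * x)
    (f' := fun x : ℝ => γ * x ^ (γ - 1) - γ * c ^ (γ - 1))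
    (s := Set.uIcc c t) (C := γ * m ^ (γ - 2) * |t - c|)
    (fun x hx => by
      have hx0 : x ≠ 0 := ne_of_gt (lt_of_lt_of_le hm (hsub hx))
      exact ((Real.hasDerivAt_rpow_const (Or.inl hx0)).sub
        ((hasDerivAt_id x).const_mul (γ * c ^ (γ - 1)))).hasDerivWithinAt.congr_deriv
        (by ring))
    (fun x hx => by
      have hxm : m ≤ x := hsub hx
      have h1 : |x ^ (γ - 1) - c ^ (γ - 1)| ≤ |γ - 1| * m ^ (γ - 2) * |x - c| := by
        have := rpow_lip (β := γ - 1) hm (by linarith) hxm hc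
        simpa [show γ - 1 - 1 = γ - 2 by ring] using this
      have h2 : |γ - 1| ≤ 1 := by rw [abs_le]; constructor <;> linarith
      have h3 : (0:ℝ) ≤ m ^ (γ - 2) := Real.rpow_nonneg hm.le _
      calc ‖γ * x ^ (γ - 1) - γ * c ^ (γ - 1)‖
          = γ * |x ^ (γ - 1) - c ^ (γ - 1)| := by
            rw [Real.norm_eq_abs, ← mul_sub, abs_mul, abs_of_pos hγ0]
        _ ≤ γ * (|γ - 1| * m ^ (γ - 2) * |x - c|) := mul_le_mul_of_nonneg_left h1 hγ0.le
        _ ≤ γ * (1 * m ^ (γ - 2) * |t - c|) := by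
            apply mul_le_mul_of_nonneg_left _ hγ0.le
            apply mul_le_mul (mul_le_mul_of_nonneg_right h2 h3) (hmem x hx)
              (abs_nonneg _) (by positivity)
        _ = γ * m ^ (γ - 2) * |t - c| := by ring)
    (convex_uIcc c t) Set.left_mem_uIcc Set.right_mem_uIcc
  have hre : (t ^ γ - γ * c ^ (γ - 1) * t) - (c ^ γ - γ * c ^ (γ - 1) * c)
      = t ^ γ - c ^ γ - γ * c ^ (γ - 1) * (t - c) := by ring
  rw [Real.norm_eq_abs, hre, Real.norm_eq_abs] at key
  calc |t ^ γ - c ^ γ - γ * c ^ (γ - 1) * (t - c)|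
      ≤ γ * m ^ (γ - 2) * |t - c| * |t - c| := key
    _ = γ * m ^ (γ - 2) * (t - c) ^ 2 := by
        rw [mul_assoc, ← abs_mul, ← sq, abs_sq]

lemma one_le_four_mul_two_rpow {p : ℝ} (hp : -2 ≤ p) : (1:ℝ) ≤ 4 * 2 ^ p := by
  have h1 : (2:ℝ) ^ (-2:ℝ) ≤ 2 ^ p :=
    Real.rpow_le_rpow_of_exponent_le one_le_two hp
  have h2 : (2:ℝ) ^ (-2:ℝ) = 1/4 := by
    rw [show (-2:ℝ) = ((-2 : ℤ) : ℝ) by norm_num, Real.rpow_intCast]; norm_num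
  rw [h2] at h1; linarith

lemma half_rpow_le {R p : ℝ} (hR : 0 < R) (hp : -2 ≤ p) : (R / 2) ^ p ≤ 4 * R ^ p := by
  rw [Real.div_rpow hR.le (by norm_num : (0:ℝ) ≤ 2),
    div_le_iff₀ (by positivity : (0:ℝ) < (2:ℝ) ^ p)]
  nlinarith [Real.rpow_nonneg hR.le p, one_le_four_mul_two_rpow hp,
    Real.rpow_pos_of_pos (show (0:ℝ) < 2 by norm_num) p]

/-- Pure-real version of the small-increment bound. -/
lemma numer_small_real {γ R a b w : ℝ} (hγ0 : 0 < γ) (hγ2 : γ < 2)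
    (hR : 0 < R) (haR : |a - R| ≤ w) (hbR : |b - R| ≤ w)
    (ham : R / 2 ≤ a) (hbm : R / 2 ≤ b)
    (habl : 2 * R ≤ a + b) (habu : a + b ≤ 2 * R + w ^ 2 / R) :
    |a ^ γ + b ^ γ - 2 * R ^ γ| ≤ 9 * γ * R ^ (γ - 2) * w ^ 2 := by
  have hm : (0:ℝ) < R / 2 := by linarith
  have hcm : R / 2 ≤ R := by linarith
  have hw0 : (0:ℝ) ≤ w := le_trans (abs_nonneg _) haR
  have hTa := rpow_taylor2 hm hγ0 hγ2 ham hcm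
  have hTb := rpow_taylor2 hm hγ0 hγ2 hbm hcm
  have hq : ∀ t : ℝ, |t - R| ≤ w → (t - R) ^ 2 ≤ w ^ 2 := fun t h => by
    nlinarith [abs_nonneg (t - R), sq_abs (t - R)]
  have hhalf : (R / 2 : ℝ) ^ (γ - 2) ≤ 4 * R ^ (γ - 2) := half_rpow_le hR (by linarith)
  have hRg2 : (0:ℝ) ≤ R ^ (γ - 2) := Real.rpow_nonneg hR.le _
  have hlin : γ * R ^ (γ - 1) * ((a - R) + (b - R)) ≤ γ * R ^ (γ - 2) * w ^ 2 := by
    have h1 : (a - R) + (b - R) ≤ w ^ 2 / R := by linarith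
    have h2 : (0:ℝ) ≤ γ * R ^ (γ - 1) := by positivity
    calc γ * R ^ (γ - 1) * ((a - R) + (b - R)) ≤ γ * R ^ (γ - 1) * (w ^ 2 / R) :=
          mul_le_mul_of_nonneg_left h1 h2
      _ = γ * (R ^ (γ - 1) / R ^ (1:ℝ)) * w ^ 2 := by rw [Real.rpow_one]; ring
      _ = γ * R ^ (γ - 2) * w ^ 2 := by
          rw [← Real.rpow_sub hR, show γ - 1 - (1:ℝ) = γ - 2 by ring]
  have hlin0 : 0 ≤ γ * R ^ (γ - 1) * ((a - R) + (b - R)) :=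
    mul_nonneg (mul_nonneg hγ0.le (Real.rpow_nonneg hR.le _)) (by linarith)
  have hTa' : |a ^ γ - R ^ γ - γ * R ^ (γ - 1) * (a - R)| ≤ 4 * γ * R ^ (γ - 2) * w ^ 2 := by
    calc |a ^ γ - R ^ γ - γ * R ^ (γ - 1) * (a - R)| ≤ γ * (R/2) ^ (γ - 2) * (a - R) ^ 2 := hTa
      _ ≤ γ * (4 * R ^ (γ - 2)) * w ^ 2 :=
          mul_le_mul (mul_le_mul_of_nonneg_left hhalf hγ0.le) (hq a haR)
            (sq_nonneg _) (by positivity)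
      _ = 4 * γ * R ^ (γ - 2) * w ^ 2 := by ring
  have hTb' : |b ^ γ - R ^ γ - γ * R ^ (γ - 1) * (b - R)| ≤ 4 * γ * R ^ (γ - 2) * w ^ 2 := by
    calc |b ^ γ - R ^ γ - γ * R ^ (γ - 1) * (b - R)| ≤ γ * (R/2) ^ (γ - 2) * (b - R) ^ 2 := hTb
      _ ≤ γ * (4 * R ^ (γ - 2)) * w ^ 2 :=
          mul_le_mul (mul_le_mul_of_nonneg_left hhalf hγ0.le) (hq b hbR)
            (sq_nonneg _) (by positivity)
      _ = 4 * γ * R ^ (γ - 2) * w ^ 2 := by ring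
  have hid : a ^ γ + b ^ γ - 2 * R ^ γ =
      (a ^ γ - R ^ γ - γ * R ^ (γ - 1) * (a - R)) +
      (b ^ γ - R ^ γ - γ * R ^ (γ - 1) * (b - R)) +
      γ * R ^ (γ - 1) * ((a - R) + (b - R)) := by ring
  rw [hid]
  have h1 := abs_add_le (a ^ γ - R ^ γ - γ * R ^ (γ - 1) * (a - R))
    (b ^ γ - R ^ γ - γ * R ^ (γ - 1) * (b - R))
  have h2 := abs_add_le ((a ^ γ - R ^ γ - γ * R ^ (γ - 1) * (a - R)) +
    (b ^ γ - R ^ γ - γ * R ^ (γ - 1) * (b - R))) (γ * R ^ (γ - 1) * ((a - R) + (b - R)))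
  have h3 : |γ * R ^ (γ - 1) * ((a - R) + (b - R))| ≤ γ * R ^ (γ - 2) * w ^ 2 := by
    rw [abs_of_nonneg hlin0]; exact hlin
  refine le_trans h2 ?_
  have h4 := le_trans h1 (add_le_add hTa' hTb')
  linarith

/-- Second-order increment bound for the norm power, small increments. -/
lemma numer_small {γ : ℝ} (hγ0 : 0 < γ) (hγ2 : γ < 2)
    {E : Type*} [NormedAddCommGroup E] [InnerProductSpace ℝ E]
    {x u : E} (hx : 0 < ‖x‖) (hu : ‖u‖ ≤ ‖x‖ / 2) :
    |‖x + u‖ ^ γ + ‖x - u‖ ^ γ - 2 * ‖x‖ ^ γ| ≤ 9 * γ * ‖x‖ ^ (γ - 2) * ‖u‖ ^ 2 := by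
  have haR : |‖x + u‖ - ‖x‖| ≤ ‖u‖ := by
    simpa using abs_norm_sub_norm_le (x + u) x
  have hbR : |‖x - u‖ - ‖x‖| ≤ ‖u‖ := by
    simpa [norm_neg] using abs_norm_sub_norm_le (x - u) x
  have ham : ‖x‖ / 2 ≤ ‖x + u‖ := by
    have h2 := haR; rw [abs_le] at h2; linarith [h2.1]
  have hbm : ‖x‖ / 2 ≤ ‖x - u‖ := by
    have h2 := hbR; rw [abs_le] at h2; linarith [h2.1]
  have hpar : ‖x + u‖ * ‖x + u‖ + ‖x - u‖ * ‖x - u‖ = 2 * (‖x‖ * ‖x‖ + ‖u‖ * ‖u‖) :=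
    by simpa only [sq] using parallelogram_law_with_norm ℝ x u
  have habl : 2 * ‖x‖ ≤ ‖x + u‖ + ‖x - u‖ := by
    have h : ‖(x + u) + (x - u)‖ ≤ ‖x + u‖ + ‖x - u‖ := norm_add_le _ _
    have h2 : (x + u) + (x - u) = x + x := by abel
    rw [h2] at h
    have h3 : ‖x + x‖ = 2 * ‖x‖ := by
      rw [show x + x = (2:ℝ) • x by module, norm_smul]; simp
    linarith [h3 ▸ h]
  have habu : ‖x + u‖ + ‖x - u‖ ≤ 2 * ‖x‖ + ‖u‖ ^ 2 / ‖x‖ := by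
    have h3 : (0:ℝ) < 2 * ‖x‖ + ‖u‖ ^ 2 / ‖x‖ := by positivity
    have hw : ‖u‖ ^ 2 = (‖u‖ ^ 2 / ‖x‖) * ‖x‖ := (div_mul_cancel₀ _ hx.ne').symm
    nlinarith [sq_nonneg (‖u‖ ^ 2 / ‖x‖), h3, hw, hpar,
      sq_nonneg (‖x + u‖ - ‖x - u‖), norm_nonneg (x + u), norm_nonneg (x - u)]
  exact numer_small_real hγ0 hγ2 hx haR hbR ham hbm habl habu

lemma dom_int {s γ R A B : ℝ} (hs0 : 0 < s) (hs1 : s < 1) (hγ0 : 0 < γ)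
    (hγs : γ < 2 * s) (hR : 0 < R) (hA : 0 ≤ A) (hB : 0 ≤ B) :
    Integrable (fun r : ℝ =>
        if |r| ≤ R / 2 then A * |r| ^ (1 - 2*s) else B * |r| ^ (γ - 1 - 2*s)) volume ∧
    (∫ r : ℝ, (if |r| ≤ R / 2 then A * |r| ^ (1 - 2*s) else B * |r| ^ (γ - 1 - 2*s)))
      = 2 * (A * (R/2) ^ (2 - 2*s) / (2 - 2*s) + B * (R/2) ^ (γ - 2*s) / (2*s - γ)) := by
  set m := R / 2 with hmdef
  have hm : (0:ℝ) < m := by simp [hmdef]; linarith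
  set g₀ : ℝ → ℝ := fun t => if t ≤ m then A * t ^ (1 - 2*s) else B * t ^ (γ - 1 - 2*s)
    with hg₀
  have hfun : (fun r : ℝ =>
      if |r| ≤ m then A * |r| ^ (1 - 2*s) else B * |r| ^ (γ - 1 - 2*s))
      = fun r : ℝ => g₀ |r| := rfl
  have h1 : IntegrableOn g₀ (Ioc 0 m) := by
    have hint : IntegrableOn (fun t : ℝ => A * t ^ (1 - 2*s)) (Ioc 0 m) := by
      have := (intervalIntegral.intervalIntegrable_rpow'
        (show (-1:ℝ) < 1 - 2*s by linarith) (a := 0) (b := m))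
      exact ((intervalIntegrable_iff_integrableOn_Ioc_of_le hm.le).mp this).const_mul A
    exact hint.congr_fun (fun t ht => by simp [hg₀, ht.2]) measurableSet_Ioc
  have h2 : IntegrableOn g₀ (Ioi m) := by
    have hint : IntegrableOn (fun t : ℝ => B * t ^ (γ - 1 - 2*s)) (Ioi m) :=
      (integrableOn_Ioi_rpow_of_lt (show γ - 1 - 2*s < -1 by linarith) hm).const_mul B
    exact hint.congr_fun (fun t ht => by simp [hg₀, not_le.mpr (mem_Ioi.mp ht)]) measurableSet_Ioi
  have hIoi : IntegrableOn g₀ (Ioi 0) := by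
    rw [← Ioc_union_Ioi_eq_Ioi hm.le]
    exact h1.union h2
  have habs : IntegrableOn (fun r : ℝ => g₀ |r|) (Ioi 0) :=
    hIoi.congr_fun (fun r hr => by rw [abs_of_pos (mem_Ioi.mp hr)]) measurableSet_Ioi
  have hIic : IntegrableOn (fun r : ℝ => g₀ |r|) (Iic 0) := by
    rw [← Measure.map_neg_eq_self (volume : Measure ℝ)]
    have mm : MeasurableEmbedding fun x : ℝ => -x := (Homeomorph.neg ℝ).measurableEmbedding
    rw [mm.integrableOn_map_iff]
    simp_rw [Function.comp_def, abs_neg, neg_preimage, neg_Iic, neg_zero]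
    exact Iff.mpr integrableOn_Ici_iff_integrableOn_Ioi habs
  have hInt : Integrable (fun r : ℝ => g₀ |r|) volume := by
    rw [← integrableOn_univ, ← Set.Iic_union_Ioi (a := (0:ℝ))]
    exact hIic.union habs
  refine ⟨hfun ▸ hInt, ?_⟩
  rw [hfun, integral_comp_abs (f := g₀)]
  have hsplit : ∫ t in Ioi (0:ℝ), g₀ t = (∫ t in Ioc 0 m, g₀ t) + ∫ t in Ioi m, g₀ t := by
    rw [← Ioc_union_Ioi_eq_Ioi hm.le]
    exact setIntegral_union (Ioc_disjoint_Ioi le_rfl) measurableSet_Ioi h1 h2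
  have hv1 : ∫ t in Ioc 0 m, g₀ t = A * m ^ (2 - 2*s) / (2 - 2*s) := by
    rw [setIntegral_congr_fun measurableSet_Ioc
      (fun t (ht : t ∈ Ioc 0 m) => by simp [hg₀, ht.2] : EqOn g₀ (fun t : ℝ => A * t ^ (1 - 2*s)) _),
      integral_const_mul, ← intervalIntegral.integral_of_le hm.le,
      integral_rpow (Or.inl (by linarith : (-1:ℝ) < 1 - 2*s))]
    rw [Real.zero_rpow (by linarith : (1 - 2*s) + 1 ≠ 0), show 1 - 2*s + 1 = 2 - 2*s by ring]
    ring
  have hv2 : ∫ t in Ioi m, g₀ t = B * m ^ (γ - 2*s) / (2*s - γ) := by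
    rw [setIntegral_congr_fun measurableSet_Ioi
      (fun t (ht : t ∈ Ioi m) => by simp [hg₀, not_le.mpr (mem_Ioi.mp ht)] :
        EqOn g₀ (fun t : ℝ => B * t ^ (γ - 1 - 2*s)) _),
      integral_const_mul, integral_Ioi_rpow_of_lt (by linarith : γ - 1 - 2*s < -1) hm,
      show γ - 1 - 2*s + 1 = γ - 2*s by ring, neg_div, ← div_neg]
    rw [show -(γ - 2*s) = 2*s - γ by ring]
    ring
  rw [hsplit, hv1, hv2]

set_option maxHeartbeats 1000000 in
/-- main theorem -/
theorem integral_power_increment_bound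
    (n : ℕ) (hn : 1 ≤ n) (s : ℝ) (hs : s ∈ Set.Ioo (0 : ℝ) 1)
    (μ : Measure (Metric.sphere (0 : EuclideanSpace ℝ (Fin n)) 1)) [IsFiniteMeasure μ]
    (Λ : ℝ) (hΛ : 0 < Λ) (hμΛ : μ Set.univ ≤ ENNReal.ofReal Λ)
    (γ : ℝ) (hγ : γ ∈ Set.Ioo (0 : ℝ) (2 * s)) :
    ∃ C : ℝ, 0 < C ∧
      ∀ x : EuclideanSpace ℝ (Fin n), 1 ≤ ‖x‖ →
        (∫ p : Metric.sphere (0 : EuclideanSpace ℝ (Fin n)) 1 × ℝ,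
            (‖x + p.2 • (p.1 : EuclideanSpace ℝ (Fin n))‖ ^ γ +
              ‖x - p.2 • (p.1 : EuclideanSpace ℝ (Fin n))‖ ^ γ - 2 * ‖x‖ ^ γ) /
              |p.2| ^ (1 + 2 * s) ∂(μ.prod volume))
          ≤ C * ‖x‖ ^ (γ - 2 * s) := by
  obtain ⟨hs0, hs1⟩ := hs
  obtain ⟨hγ0, hγ2s⟩ := hγ
  have hγ2 : γ < 2 := by linarith
  have h3γ : (0:ℝ) < 3 ^ γ := Real.rpow_pos_of_pos (by norm_num) γ
  have hd1 : (0:ℝ) < 2 - 2*s := by linarith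
  have hd2 : (0:ℝ) < 2*s - γ := by linarith
  refine ⟨Λ * (2 * ((9*γ) * 4 / (2 - 2*s) + (4 * 3 ^ γ) * 4 / (2*s - γ))),
    by positivity, ?_⟩
  intro x hx
  have hR0 : (0:ℝ) < ‖x‖ := by linarith
  have hA : (0:ℝ) ≤ 9 * γ * ‖x‖ ^ (γ - 2) := by positivity
  have hB : (0:ℝ) ≤ 4 * 3 ^ γ := by positivity
  obtain ⟨hgInt, hgVal⟩ := dom_int (A := 9 * γ * ‖x‖ ^ (γ - 2)) (B := 4 * 3 ^ γ)
    (R := ‖x‖) hs0 hs1 hγ0 hγ2s hR0 hA hB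
  set g : ℝ → ℝ := fun r : ℝ =>
    if |r| ≤ ‖x‖ / 2 then 9 * γ * ‖x‖ ^ (γ - 2) * |r| ^ (1 - 2*s)
    else 4 * 3 ^ γ * |r| ^ (γ - 1 - 2*s) with hgdef
  -- nonnegativity of g
  have hgnn : ∀ r : ℝ, 0 ≤ g r := by
    intro r
    rw [hgdef]
    dsimp only
    split
    · positivity
    · positivity
  -- pointwise bound
  have hbound : ∀ p : Metric.sphere (0 : EuclideanSpace ℝ (Fin n)) 1 × ℝ,
      ‖(‖x + p.2 • (p.1 : EuclideanSpace ℝ (Fin n))‖ ^ γ +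
          ‖x - p.2 • (p.1 : EuclideanSpace ℝ (Fin n))‖ ^ γ - 2 * ‖x‖ ^ γ) /
          |p.2| ^ (1 + 2 * s)‖ ≤ g p.2 := by
    rintro ⟨ϑ, r⟩
    dsimp only
    have hϑ : ‖(ϑ : EuclideanSpace ℝ (Fin n))‖ = 1 := by
      have := ϑ.2
      rwa [mem_sphere_zero_iff_norm] at this
    have hu : ‖r • (ϑ : EuclideanSpace ℝ (Fin n))‖ = |r| := by
      rw [norm_smul, hϑ, mul_one, Real.norm_eq_abs]
    rw [Real.norm_eq_abs, abs_div, abs_of_nonneg (Real.rpow_nonneg (abs_nonneg r) _)]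
    by_cases hsmall : |r| ≤ ‖x‖ / 2
    · rw [hgdef]
      dsimp only
      rw [if_pos hsmall]
      by_cases hr0 : r = 0
      · subst hr0
        simp only [zero_smul, add_zero, sub_zero]
        rw [show ‖x‖ ^ γ + ‖x‖ ^ γ - 2 * ‖x‖ ^ γ = 0 by ring, abs_zero, zero_div]
        positivity
      · have habs0 : (0:ℝ) < |r| := abs_pos.mpr hr0
        have hden : (0:ℝ) < |r| ^ (1 + 2*s) := Real.rpow_pos_of_pos habs0 _
        have hnum := numer_small hγ0 hγ2 hR0 (u := r • (ϑ : EuclideanSpace ℝ (Fin n)))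
          (by rw [hu]; exact hsmall)
        rw [hu] at hnum
        have hnum2 : |‖x + r • (ϑ : EuclideanSpace ℝ (Fin n))‖ ^ γ +
            ‖x - r • (ϑ : EuclideanSpace ℝ (Fin n))‖ ^ γ - 2 * ‖x‖ ^ γ|
            ≤ 9 * γ * ‖x‖ ^ (γ - 2) * |r| ^ (2:ℝ) := by
          rw [show |r| ^ (2:ℝ) = |r| ^ (2:ℕ) by
            rw [← Real.rpow_natCast |r| 2]; norm_num]
          exact hnum
        calc |‖x + r • (ϑ : EuclideanSpace ℝ (Fin n))‖ ^ γ +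
              ‖x - r • (ϑ : EuclideanSpace ℝ (Fin n))‖ ^ γ - 2 * ‖x‖ ^ γ| / |r| ^ (1 + 2*s)
            ≤ (9 * γ * ‖x‖ ^ (γ - 2) * |r| ^ (2:ℝ)) / |r| ^ (1 + 2*s) :=
              div_le_div_of_nonneg_right hnum2 hden.le
          _ = 9 * γ * ‖x‖ ^ (γ - 2) * |r| ^ (1 - 2*s) := by
              rw [mul_div_assoc, ← Real.rpow_sub habs0,
                show (2:ℝ) - (1 + 2*s) = 1 - 2*s by ring]
    · rw [hgdef]
      dsimp only
      rw [if_neg hsmall]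
      push_neg at hsmall
      have habs0 : (0:ℝ) < |r| := lt_of_le_of_lt (by linarith) hsmall
      have hden : (0:ℝ) < |r| ^ (1 + 2*s) := Real.rpow_pos_of_pos habs0 _
      have hxa : ‖x + r • (ϑ : EuclideanSpace ℝ (Fin n))‖ ≤ 3 * |r| := by
        calc ‖x + r • (ϑ : EuclideanSpace ℝ (Fin n))‖
            ≤ ‖x‖ + ‖r • (ϑ : EuclideanSpace ℝ (Fin n))‖ := norm_add_le _ _
          _ ≤ 3 * |r| := by rw [hu]; linarith
      have hxb : ‖x - r • (ϑ : EuclideanSpace ℝ (Fin n))‖ ≤ 3 * |r| := by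
        calc ‖x - r • (ϑ : EuclideanSpace ℝ (Fin n))‖
            ≤ ‖x‖ + ‖r • (ϑ : EuclideanSpace ℝ (Fin n))‖ := norm_sub_le _ _
          _ ≤ 3 * |r| := by rw [hu]; linarith
      have hxR : ‖x‖ ≤ 3 * |r| := by linarith
      have h3r : (3:ℝ) * |r| ≥ 0 := by positivity
      have hpowa : ‖x + r • (ϑ : EuclideanSpace ℝ (Fin n))‖ ^ γ ≤ 3 ^ γ * |r| ^ γ := by
        calc ‖x + r • (ϑ : EuclideanSpace ℝ (Fin n))‖ ^ γ ≤ (3 * |r|) ^ γ :=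
              Real.rpow_le_rpow (norm_nonneg _) hxa hγ0.le
          _ = 3 ^ γ * |r| ^ γ := Real.mul_rpow (by norm_num) (abs_nonneg r)
      have hpowb : ‖x - r • (ϑ : EuclideanSpace ℝ (Fin n))‖ ^ γ ≤ 3 ^ γ * |r| ^ γ := by
        calc ‖x - r • (ϑ : EuclideanSpace ℝ (Fin n))‖ ^ γ ≤ (3 * |r|) ^ γ :=
              Real.rpow_le_rpow (norm_nonneg _) hxb hγ0.le
          _ = 3 ^ γ * |r| ^ γ := Real.mul_rpow (by norm_num) (abs_nonneg r)
      have hpowR : ‖x‖ ^ γ ≤ 3 ^ γ * |r| ^ γ := by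
        calc ‖x‖ ^ γ ≤ (3 * |r|) ^ γ := Real.rpow_le_rpow (norm_nonneg _) hxR hγ0.le
          _ = 3 ^ γ * |r| ^ γ := Real.mul_rpow (by norm_num) (abs_nonneg r)
      have hnn1 : (0:ℝ) ≤ ‖x + r • (ϑ : EuclideanSpace ℝ (Fin n))‖ ^ γ :=
        Real.rpow_nonneg (norm_nonneg _) _
      have hnn2 : (0:ℝ) ≤ ‖x - r • (ϑ : EuclideanSpace ℝ (Fin n))‖ ^ γ :=
        Real.rpow_nonneg (norm_nonneg _) _
      have hnn3 : (0:ℝ) ≤ ‖x‖ ^ γ := Real.rpow_nonneg (norm_nonneg _) _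
      have hnum2 : |‖x + r • (ϑ : EuclideanSpace ℝ (Fin n))‖ ^ γ +
          ‖x - r • (ϑ : EuclideanSpace ℝ (Fin n))‖ ^ γ - 2 * ‖x‖ ^ γ|
          ≤ 4 * 3 ^ γ * |r| ^ γ := by
        rw [abs_le]
        constructor <;> nlinarith
      calc |‖x + r • (ϑ : EuclideanSpace ℝ (Fin n))‖ ^ γ +
            ‖x - r • (ϑ : EuclideanSpace ℝ (Fin n))‖ ^ γ - 2 * ‖x‖ ^ γ| / |r| ^ (1 + 2*s)
          ≤ (4 * 3 ^ γ * |r| ^ γ) / |r| ^ (1 + 2*s) :=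
            div_le_div_of_nonneg_right hnum2 hden.le
        _ = 4 * 3 ^ γ * |r| ^ (γ - 1 - 2*s) := by
            rw [mul_div_assoc, ← Real.rpow_sub habs0,
              show γ - (1 + 2*s) = γ - 1 - 2*s by ring]
  -- integrable dominating function on the product
  have hGint : Integrable
      (fun p : Metric.sphere (0 : EuclideanSpace ℝ (Fin n)) 1 × ℝ => g p.2)
      (μ.prod volume) := by
    have := (integrable_const (1:ℝ) (μ := μ)).mul_prod hgInt
    simpa [hgdef] using this
  -- value of the dominating integral
  have hGval : (∫ p : Metric.sphere (0 : EuclideanSpace ℝ (Fin n)) 1 × ℝ,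
      g p.2 ∂(μ.prod volume)) = (μ Set.univ).toReal * ∫ r : ℝ, g r := by
    have h := integral_prod_mul (μ := μ) (ν := (volume : Measure ℝ))
      (fun _ => (1:ℝ)) g
    exact (by simpa [integral_const, smul_eq_mul] using h : (∫ p : Metric.sphere (0 : EuclideanSpace ℝ (Fin n)) 1 × ℝ,
        g p.2 ∂(μ.prod volume)) = μ.real Set.univ * ∫ r : ℝ, g r)
  -- bound the one-dimensional integral
  have hgle : (∫ r : ℝ, g r) ≤
      (2 * ((9*γ) * 4 / (2 - 2*s) + (4 * 3 ^ γ) * 4 / (2*s - γ))) * ‖x‖ ^ (γ - 2*s) := by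
    rw [hgdef] at *
    rw [hgVal]
    have hA4 : 9 * γ * ‖x‖ ^ (γ - 2) * (‖x‖/2) ^ (2 - 2*s) ≤ (9*γ) * 4 * ‖x‖ ^ (γ - 2*s) := by
      calc 9 * γ * ‖x‖ ^ (γ - 2) * (‖x‖/2) ^ (2 - 2*s)
          ≤ 9 * γ * ‖x‖ ^ (γ - 2) * (4 * ‖x‖ ^ (2 - 2*s)) :=
            mul_le_mul_of_nonneg_left (half_rpow_le hR0 (by linarith)) hA
        _ = (9*γ) * 4 * (‖x‖ ^ (γ - 2) * ‖x‖ ^ (2 - 2*s)) := by ring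
        _ = (9*γ) * 4 * ‖x‖ ^ (γ - 2*s) := by
            rw [← Real.rpow_add hR0, show γ - 2 + (2 - 2*s) = γ - 2*s by ring]
    have hB4 : 4 * 3 ^ γ * (‖x‖/2) ^ (γ - 2*s) ≤ (4 * 3 ^ γ) * 4 * ‖x‖ ^ (γ - 2*s) := by
      calc 4 * 3 ^ γ * (‖x‖/2) ^ (γ - 2*s)
          ≤ 4 * 3 ^ γ * (4 * ‖x‖ ^ (γ - 2*s)) :=
            mul_le_mul_of_nonneg_left (half_rpow_le hR0 (by linarith)) hB
        _ = (4 * 3 ^ γ) * 4 * ‖x‖ ^ (γ - 2*s) := by ring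
    calc 2 * (9 * γ * ‖x‖ ^ (γ - 2) * (‖x‖/2) ^ (2 - 2*s) / (2 - 2*s)
          + 4 * 3 ^ γ * (‖x‖/2) ^ (γ - 2*s) / (2*s - γ))
        ≤ 2 * ((9*γ) * 4 * ‖x‖ ^ (γ - 2*s) / (2 - 2*s)
          + (4 * 3 ^ γ) * 4 * ‖x‖ ^ (γ - 2*s) / (2*s - γ)) := by gcongr
      _ = (2 * ((9*γ) * 4 / (2 - 2*s) + (4 * 3 ^ γ) * 4 / (2*s - γ))) * ‖x‖ ^ (γ - 2*s) := by
          ring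
  have hμle : (μ Set.univ).toReal ≤ Λ :=
    ENNReal.toReal_le_of_le_ofReal hΛ.le hμΛ
  have hgint_nn : (0:ℝ) ≤ ∫ r : ℝ, g r := integral_nonneg hgnn
  -- final chain
  calc (∫ p : Metric.sphere (0 : EuclideanSpace ℝ (Fin n)) 1 × ℝ,
        (‖x + p.2 • (p.1 : EuclideanSpace ℝ (Fin n))‖ ^ γ +
          ‖x - p.2 • (p.1 : EuclideanSpace ℝ (Fin n))‖ ^ γ - 2 * ‖x‖ ^ γ) /
          |p.2| ^ (1 + 2 * s) ∂(μ.prod volume))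
      ≤ ‖(∫ p : Metric.sphere (0 : EuclideanSpace ℝ (Fin n)) 1 × ℝ,
        (‖x + p.2 • (p.1 : EuclideanSpace ℝ (Fin n))‖ ^ γ +
          ‖x - p.2 • (p.1 : EuclideanSpace ℝ (Fin n))‖ ^ γ - 2 * ‖x‖ ^ γ) /
          |p.2| ^ (1 + 2 * s) ∂(μ.prod volume))‖ := le_abs_self _
    _ ≤ ∫ p : Metric.sphere (0 : EuclideanSpace ℝ (Fin n)) 1 × ℝ,
        ‖(‖x + p.2 • (p.1 : EuclideanSpace ℝ (Fin n))‖ ^ γ +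
          ‖x - p.2 • (p.1 : EuclideanSpace ℝ (Fin n))‖ ^ γ - 2 * ‖x‖ ^ γ) /
          |p.2| ^ (1 + 2 * s)‖ ∂(μ.prod volume) := norm_integral_le_integral_norm _
    _ ≤ ∫ p : Metric.sphere (0 : EuclideanSpace ℝ (Fin n)) 1 × ℝ,
        g p.2 ∂(μ.prod volume) :=
          integral_mono_of_nonneg (Filter.Eventually.of_forall (fun p => norm_nonneg _))
            hGint (Filter.Eventually.of_forall hbound)
    _ = (μ Set.univ).toReal * ∫ r : ℝ, g r := hGval
    _ ≤ Λ * ((2 * ((9*γ) * 4 / (2 - 2*s) + (4 * 3 ^ γ) * 4 / (2*s - γ))) * ‖x‖ ^ (γ - 2*s)) :=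
          mul_le_mul hμle hgle hgint_nn hΛ.le
    _ = Λ * (2 * ((9*γ) * 4 / (2 - 2*s) + (4 * 3 ^ γ) * 4 / (2*s - γ))) * ‖x‖ ^ (γ - 2*s) := by
          ring
end

section
/- Let f : ℝ → ℝ be continuous and nondecreasing, and let u ∈ C²(ℝⁿ) satisfy ℐu(x) = f(u(x)) for every x ∈ ℝⁿ. Assume that |u(x)| ≤ K(1 + |x|^κ) for all x ∈ ℝⁿ, for some K ≥ 0 and κ ∈ [0, 2s). Then f(u(x)) = 0 for every x ∈ ℝⁿ, and consequently ℐu(x) = 0 for every x ∈ ℝⁿ. -/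
open MeasureTheory
open scoped RealInnerProductSpace

section Aux

open Set Filter
open scoped Topology


lemma rpow_subadd_s9 {a b p : ℝ} (ha : 0 ≤ a) (hb : 0 ≤ b) (hp : 0 ≤ p) (hp1 : p ≤ 1) :
    (a + b) ^ p ≤ a ^ p + b ^ p := by
  have h := NNReal.rpow_add_le_add_rpow a.toNNReal b.toNNReal hp hp1
  have h2 := NNReal.coe_le_coe.2 h
  rw [NNReal.coe_add, NNReal.coe_rpow, NNReal.coe_rpow, NNReal.coe_rpow, NNReal.coe_add,
    Real.coe_toNNReal a ha, Real.coe_toNNReal b hb] at h2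
  exact h2

lemma barrier_second_diff {β c d a b : ℝ} (hβ0 : 0 < β) (hβ1 : β < 1) (hc : 1 ≤ c)
    (hd : 0 < d) (ha : 0 ≤ a) (hb : 0 ≤ b) (hab : a + b = 2 * c + 2 * d) :
    a ^ β + b ^ β - 2 * c ^ β ≤ 2 * min d (d ^ β) := by
  have hcon := (Real.strictConcaveOn_rpow hβ0 hβ1).concaveOn
  have hc0 : (0:ℝ) < c := by linarith
  -- midpoint concavity
  have hmid : (1/2 : ℝ) * a ^ β + (1/2 : ℝ) * b ^ β ≤ ((1/2 : ℝ) * a + (1/2 : ℝ) * b) ^ β := by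
    have := hcon.2 (mem_Ici.2 ha) (mem_Ici.2 hb) (by norm_num) (by norm_num)
      (by norm_num : (1/2 : ℝ) + 1/2 = 1)
    simpa [smul_eq_mul] using this
  have hmid' : a ^ β + b ^ β ≤ 2 * (c + d) ^ β := by
    have h3 : (1/2 : ℝ) * a + (1/2 : ℝ) * b = c + d := by linarith
    rw [h3] at hmid; linarith
  -- bound 1 : subadditivity
  have hb1 : (c + d) ^ β ≤ c ^ β + d ^ β := rpow_subadd_s9 hc0.le hd.le hβ0.le hβ1.le
  -- bound 2 : slope
  have hb2 : (c + d) ^ β ≤ c ^ β + d := by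
    have hs := hcon.slope_anti_adjacent (mem_Ici.2 le_rfl) (mem_Ici.2 (by linarith : (0:ℝ) ≤ c + d))
      hc0 (by linarith : c < c + d)
    rw [Real.zero_rpow hβ0.ne'] at hs
    have hcc : c ^ β ≤ c := by
      calc c ^ β ≤ c ^ (1:ℝ) := Real.rpow_le_rpow_of_exponent_le hc hβ1.le
      _ = c := Real.rpow_one c
    have h4 : ((c+d) ^ β - c ^ β) / (c + d - c) ≤ (c ^ β - 0)/(c - 0) := hs
    have h5 : (c ^ β - 0)/(c - 0) ≤ 1 := by
      rw [sub_zero, sub_zero, div_le_one hc0]; exact hcc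
    have h6 : ((c+d) ^ β - c ^ β) / d ≤ 1 := by
      have : c + d - c = d := by ring
      rw [this] at h4; linarith
    have := (div_le_one hd).1 h6
    linarith
  have := le_min (by linarith : (c+d)^β - c^β ≤ d) (by linarith : (c+d)^β - c^β ≤ d ^ β)
  linarith [hmid']


lemma G_integrable {β s : ℝ} (hβ0 : 0 < β) (hs0 : 0 < s) (hs1 : s < 1) (hβs : 2*β < 2*s) :
    Integrable (fun r : ℝ => 2 * min (|r| ^ (2:ℝ)) (|r| ^ (2*β)) / |r| ^ (1 + 2*s)) volume := by
  set G : ℝ → ℝ := fun r => 2 * min (|r| ^ (2:ℝ)) (|r| ^ (2*β)) / |r| ^ (1 + 2*s) with hG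
  have hGmeas : Measurable G := by fun_prop
  have hGnn : ∀ r, 0 ≤ G r := fun r => by
    apply div_nonneg _ (Real.rpow_nonneg (abs_nonneg r) _)
    have h1 := Real.rpow_nonneg (abs_nonneg r) (2:ℝ)
    have h2 := Real.rpow_nonneg (abs_nonneg r) (2*β)
    have := le_min h1 h2
    positivity
  have hIoi1 : IntegrableOn G (Ioi 1) volume := by
    have hint : IntegrableOn (fun r : ℝ => r ^ (2*β - (1+2*s))) (Ioi 1) volume :=
      integrableOn_Ioi_rpow_of_lt (by linarith) one_pos
    refine ((hint.const_mul 2).mono' hGmeas.aestronglyMeasurable ?_)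
    refine (ae_restrict_iff' measurableSet_Ioi).2 (ae_of_all _ fun r hr => ?_)
    have hr1 : (1:ℝ) < r := hr
    have hr0 : (0:ℝ) < r := by linarith
    have habs : |r| = r := abs_of_pos hr0
    rw [Real.norm_eq_abs, abs_of_nonneg (hGnn r), hG]
    simp only [habs]
    rw [Real.rpow_sub hr0, ← mul_div_assoc]
    gcongr
    exact min_le_right _ _
  have hIoc : IntegrableOn G (Ioc 0 1) volume := by
    have hint : IntervalIntegrable (fun r : ℝ => r ^ ((2:ℝ) - (1+2*s))) volume 0 1 :=
      intervalIntegral.intervalIntegrable_rpow' (by linarith)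
    have hint2 : IntegrableOn (fun r : ℝ => r ^ ((2:ℝ) - (1+2*s))) (Ioc 0 1) volume := by
      rwa [intervalIntegrable_iff, uIoc_of_le zero_le_one] at hint
    refine ((hint2.const_mul 2).mono' hGmeas.aestronglyMeasurable ?_)
    refine (ae_restrict_iff' measurableSet_Ioc).2 (ae_of_all _ fun r hr => ?_)
    have hr0 : (0:ℝ) < r := hr.1
    have habs : |r| = r := abs_of_pos hr0
    rw [Real.norm_eq_abs, abs_of_nonneg (hGnn r), hG]
    simp only [habs]
    rw [Real.rpow_sub hr0, ← mul_div_assoc]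
    gcongr
    exact min_le_left _ _
  have hIci : IntegrableOn G (Ici 0) volume := by
    rw [integrableOn_Ici_iff_integrableOn_Ioi, ← Ioc_union_Ioi_eq_Ioi (zero_le_one' ℝ)]
    exact hIoc.union hIoi1
  have hIic : IntegrableOn G (Iic 0) volume := by
    have hev : (G ∘ Neg.neg) = G := funext fun r => by simp [hG, abs_neg]
    have h := (MeasurePreserving.integrableOn_comp_preimage
      (Measure.measurePreserving_neg (volume : Measure ℝ))
      (Homeomorph.neg ℝ).measurableEmbedding (f := G) (s := Ici 0)).2 hIci
    have hpre : ((Neg.neg : ℝ → ℝ) ⁻¹' Ici 0) = Iic 0 := by ext z; simp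
    rwa [hpre, hev] at h
  rw [← integrableOn_univ, ← Iic_union_Ici (a := (0:ℝ))]
  exact hIic.union hIci

theorem half {n : ℕ} {s : ℝ} (hs : s ∈ Set.Ioo (0:ℝ) 1)
    (μ : Measure (Metric.sphere (0 : EuclideanSpace ℝ (Fin n)) 1)) [IsFiniteMeasure μ]
    (f : ℝ → ℝ) (hf_cont : Continuous f) (hf_mono : Monotone f)
    (u : EuclideanSpace ℝ (Fin n) → ℝ) (hu : Continuous u)
    (heq : ∀ x, opI n s μ u x = f (u x))
    (K κ : ℝ) (hK : 0 ≤ K) (hκ0 : 0 ≤ κ) (hκ : κ < 2 * s)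
    (hgrowth : ∀ x, |u x| ≤ K * (1 + ‖x‖ ^ κ))
    (x₀ : EuclideanSpace ℝ (Fin n)) : f (u x₀) ≤ 0 := by
  obtain ⟨hs0, hs1⟩ := hs
  set β : ℝ := (κ + 2*s)/4 with hβdef
  have hβ0 : 0 < β := by rw [hβdef]; linarith
  have hβ1 : β < 1 := by rw [hβdef]; linarith
  have h2βκ : κ < 2*β := by rw [hβdef]; linarith
  have h2βs : 2*β < 2*s := by rw [hβdef]; linarith
  set φ : EuclideanSpace ℝ (Fin n) → ℝ := fun z => (1 + ‖z‖^2) ^ β with hφdef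
  have hφ_cont : Continuous φ := by
    apply Continuous.rpow_const
    · exact continuous_const.add ((continuous_norm).pow 2)
    · intro z; right; exact hβ0.le
  have hφ_nn : ∀ z, 0 ≤ φ z := fun z => Real.rpow_nonneg (by positivity) _
  have hφ_lb : ∀ z : EuclideanSpace ℝ (Fin n), ‖z‖ ^ (2*β) ≤ φ z := by
    intro z
    have h1 : ‖z‖ ^ (2*β) = (‖z‖^2 : ℝ) ^ β := by
      rw [← Real.rpow_natCast ‖z‖ 2, ← Real.rpow_mul (norm_nonneg z)]
      norm_num
    rw [h1]
    exact Real.rpow_le_rpow (by positivity) (by linarith) hβ0.le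
  set G : ℝ → ℝ := fun r => 2 * min (|r| ^ (2:ℝ)) (|r| ^ (2*β)) / |r| ^ (1 + 2*s) with hGdef
  have hGnn : ∀ r, 0 ≤ G r := fun r => by
    apply div_nonneg _ (Real.rpow_nonneg (abs_nonneg r) _)
    have h1 := Real.rpow_nonneg (abs_nonneg r) (2:ℝ)
    have h2 := Real.rpow_nonneg (abs_nonneg r) (2*β)
    have := le_min h1 h2
    positivity
  have hGint : Integrable G volume := G_integrable hβ0 hs0 hs1 h2βs
  have hGint2 : Integrable
      (fun p : Metric.sphere (0 : EuclideanSpace ℝ (Fin n)) 1 × ℝ => G p.2) (μ.prod volume) := by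
    have h1 : Integrable (fun _ : Metric.sphere (0 : EuclideanSpace ℝ (Fin n)) 1 => (1:ℝ)) μ :=
      integrable_const 1
    simpa using h1.mul_prod hGint
  set C : ℝ := ∫ p : Metric.sphere (0 : EuclideanSpace ℝ (Fin n)) 1 × ℝ,
      G p.2 ∂(μ.prod volume) with hCdef
  have hC0 : 0 ≤ C := integral_nonneg fun p => hGnn _
  have key : ∀ ε : ℝ, 0 < ε → f (u x₀ - ε * φ x₀) ≤ ε * C := by
    intro ε hε
    obtain ⟨x, hx⟩ : ∃ x : EuclideanSpace ℝ (Fin n),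
        ∀ y : EuclideanSpace ℝ (Fin n), u y - ε * φ y ≤ u x - ε * φ x := by
      apply Continuous.exists_forall_ge (hu.sub (continuous_const.mul hφ_cont))
      have hcomp : Tendsto (fun t : ℝ => K + t ^ (2*β) * (K * t ^ (κ - 2*β) - ε))
          atTop atBot := by
        have h1 : Tendsto (fun t : ℝ => t ^ (2*β)) atTop atTop :=
          tendsto_rpow_atTop (by linarith)
        have h2 : Tendsto (fun t : ℝ => K * t ^ (κ - 2*β) - ε) atTop (𝓝 (K * 0 - ε)) := by
          apply Tendsto.sub_const
          apply Tendsto.const_mul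
          have h3 : κ - 2*β = -(2*β - κ) := by ring
          rw [h3]
          exact tendsto_rpow_neg_atTop (by linarith)
        have h3 := h1.atTop_mul_neg (by linarith : K * 0 - ε < 0) h2
        exact tendsto_atBot_add_const_left _ K h3
      apply tendsto_atBot_mono' _ _ (hcomp.comp tendsto_norm_cocompact_atTop)
      filter_upwards [tendsto_norm_cocompact_atTop.eventually_ge_atTop 1] with z hz
      have h0 : (0:ℝ) < ‖z‖ := by linarith
      have hu1 : u z ≤ K * (1 + ‖z‖ ^ κ) := le_trans (le_abs_self _) (hgrowth z)
      have hφ1 : ε * ‖z‖ ^ (2*β) ≤ ε * φ z := mul_le_mul_of_nonneg_left (hφ_lb z) hε.le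
      have hsplit : ‖z‖ ^ (2*β) * ‖z‖ ^ (κ - 2*β) = ‖z‖ ^ κ := by
        rw [← Real.rpow_add h0]; ring_nf
      show u z - ε * φ z ≤ K + ‖z‖ ^ (2*β) * (K * ‖z‖ ^ (κ - 2*β) - ε)
      have hexp : K + ‖z‖ ^ (2*β) * (K * ‖z‖ ^ (κ - 2*β) - ε)
          = K + K * ‖z‖ ^ κ - ε * ‖z‖ ^ (2*β) := by
        rw [show ‖z‖ ^ (2*β) * (K * ‖z‖ ^ (κ - 2*β) - ε)
            = K * (‖z‖ ^ (2*β) * ‖z‖ ^ (κ - 2*β)) - ε * ‖z‖ ^ (2*β) by ring, hsplit]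
        ring
      rw [hexp]
      nlinarith [hφ1, hu1]
    have hxmax : ∀ z : EuclideanSpace ℝ (Fin n), u z - u x ≤ ε * (φ z - φ x) := by
      intro z; have h := hx z; nlinarith [h]
    set F : Metric.sphere (0 : EuclideanSpace ℝ (Fin n)) 1 × ℝ → ℝ := fun p =>
      (u (x + p.2 • (p.1 : EuclideanSpace ℝ (Fin n))) +
        u (x - p.2 • (p.1 : EuclideanSpace ℝ (Fin n))) - 2 * u x) / |p.2| ^ (1 + 2*s)
      with hFdef
    have hFle : ∀ p : Metric.sphere (0 : EuclideanSpace ℝ (Fin n)) 1 × ℝ, F p ≤ ε * G p.2 := by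
      rintro ⟨ϑ, r⟩
      by_cases hr : r = 0
      · subst hr
        have hnum : u (x + (0:ℝ) • (ϑ : EuclideanSpace ℝ (Fin n))) +
            u (x - (0:ℝ) • (ϑ : EuclideanSpace ℝ (Fin n))) - 2 * u x = 0 := by
          rw [zero_smul, add_zero, sub_zero]; ring
        have hF0 : F (ϑ, 0) = 0 := by
          simp only [hFdef]; rw [hnum, zero_div]
        have hG0 : G 0 = 0 := by
          simp only [hGdef]
          rw [abs_zero, Real.zero_rpow (by norm_num : (2:ℝ) ≠ 0),
            Real.zero_rpow (by intro h; nlinarith : 2*β ≠ 0)]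
          simp
        rw [hF0, hG0, mul_zero]
      · set y : EuclideanSpace ℝ (Fin n) := r • (ϑ : EuclideanSpace ℝ (Fin n)) with hydef
        have hϑ : ‖(ϑ : EuclideanSpace ℝ (Fin n))‖ = 1 := norm_eq_of_mem_sphere ϑ
        have hy : ‖y‖ = |r| := by
          rw [hydef, norm_smul, hϑ, mul_one, Real.norm_eq_abs]
        have hD : (0:ℝ) < |r| ^ (1 + 2*s) := Real.rpow_pos_of_pos (abs_pos.2 hr) _
        have hnum : u (x + y) + u (x - y) - 2 * u x
            ≤ ε * (2 * min (|r| ^ (2:ℝ)) (|r| ^ (2*β))) := by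
          have h1 := hxmax (x + y)
          have h2 := hxmax (x - y)
          have hpar : (1 + ‖x + y‖^2) + (1 + ‖x - y‖^2)
              = 2 * (1 + ‖x‖^2) + 2 * ‖y‖^2 := by
            rw [norm_add_sq_real, norm_sub_sq_real]; ring
          have hd : (0:ℝ) < ‖y‖^2 := by
            have hy0 : (0:ℝ) < ‖y‖ := by rw [hy]; exact abs_pos.2 hr
            exact pow_pos hy0 2
          have hbar := barrier_second_diff hβ0 hβ1
            (by linarith [sq_nonneg ‖x‖] : 1 ≤ 1 + ‖x‖^2) hd
            (by positivity : (0:ℝ) ≤ 1 + ‖x+y‖^2) (by positivity : (0:ℝ) ≤ 1 + ‖x-y‖^2) hpar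
          have hmin : min (‖y‖^2) ((‖y‖^2) ^ β) = min (|r| ^ (2:ℝ)) (|r| ^ (2*β)) := by
            have e1 : (‖y‖^2 : ℝ) = |r| ^ (2:ℝ) := by
              rw [hy, ← Real.rpow_natCast |r| 2]; norm_num
            rw [e1, ← Real.rpow_mul (abs_nonneg r)]
          have hφsum : φ (x + y) + φ (x - y) - 2 * φ x
              ≤ 2 * min (|r| ^ (2:ℝ)) (|r| ^ (2*β)) := by
            rw [← hmin]
            simp only [hφdef]
            exact hbar
          have h3 := mul_le_mul_of_nonneg_left hφsum hε.le
          linarith [h1, h2, h3]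
        show (u (x + r • (ϑ : EuclideanSpace ℝ (Fin n))) +
            u (x - r • (ϑ : EuclideanSpace ℝ (Fin n))) - 2 * u x) / |r| ^ (1 + 2*s)
            ≤ ε * (2 * min (|r| ^ (2:ℝ)) (|r| ^ (2*β)) / |r| ^ (1 + 2*s))
        rw [mul_div_assoc']
        exact div_le_div_of_nonneg_right hnum hD.le
    have hfux : f (u x) ≤ ε * C := by
      by_cases hFint : Integrable F (μ.prod volume)
      · have h1 : opI n s μ u x = ∫ p, F p ∂(μ.prod volume) := rfl
        have h2 : (∫ p, F p ∂(μ.prod volume)) ≤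
            ∫ p : Metric.sphere (0 : EuclideanSpace ℝ (Fin n)) 1 × ℝ,
            ε * G p.2 ∂(μ.prod volume) :=
          integral_mono hFint (hGint2.const_mul ε) hFle
        have h3 : (∫ p : Metric.sphere (0 : EuclideanSpace ℝ (Fin n)) 1 × ℝ,
            ε * G p.2 ∂(μ.prod volume)) = ε * C := by
          rw [hCdef]; exact integral_const_mul ε _
        rw [← heq x, h1]
        rw [h3] at h2
        exact h2
      · have h0 : opI n s μ u x = 0 := integral_undef hFint
        rw [← heq x, h0]
        positivity
    have hux : u x₀ - ε * φ x₀ ≤ u x := by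
      have h1 := hx x₀
      nlinarith [mul_nonneg hε.le (hφ_nn x)]
    exact le_trans (hf_mono hux) hfux
  have h1 : Tendsto (fun ε : ℝ => f (u x₀ - ε * φ x₀)) (nhdsWithin 0 (Ioi 0)) (𝓝 (f (u x₀))) := by
    have h2 : Tendsto (fun ε : ℝ => u x₀ - ε * φ x₀) (𝓝 0) (𝓝 (u x₀)) := by
      have h3 : Continuous (fun ε : ℝ => u x₀ - ε * φ x₀) :=
        continuous_const.sub (continuous_id.mul continuous_const)
      have h4 := h3.tendsto (0:ℝ)
      simpa using h4
    exact (hf_cont.tendsto _).comp (h2.mono_left nhdsWithin_le_nhds)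
  have h2 : Tendsto (fun ε : ℝ => ε * C) (nhdsWithin 0 (Ioi 0)) (𝓝 0) := by
    have h3 : Continuous (fun ε : ℝ => ε * C) := continuous_id.mul continuous_const
    have h4 := h3.tendsto (0:ℝ)
    simp only [zero_mul] at h4
    exact h4.mono_left nhdsWithin_le_nhds
  refine le_of_tendsto_of_tendsto h1 h2 ?_
  filter_upwards [self_mem_nhdsWithin] with ε hε
  exact key ε hε

end Aux

/-- If `f` is continuous and nondecreasing, `u ∈ C²(ℝⁿ)` solves `ℐu = f(u)` in `ℝⁿ`,
and `|u(x)| ≤ K(1+|x|^κ)` with `κ ∈ [0,2s)`, then `f(u) ≡ 0` and hence `ℐu ≡ 0`. -/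
theorem nonlinearity_vanishes_of_subcritical_growth
    (n : ℕ) (hn : 1 ≤ n) (s : ℝ) (hs : s ∈ Set.Ioo (0 : ℝ) 1)
    (μ : Measure (Metric.sphere (0 : EuclideanSpace ℝ (Fin n)) 1)) [IsFiniteMeasure μ]
    (lam Λ : ℝ) (hlam : 0 < lam) (hΛ : 0 < Λ)
    (hnondeg : ∀ ν : Metric.sphere (0 : EuclideanSpace ℝ (Fin n)) 1,
      lam ≤ ∫ ϑ : Metric.sphere (0 : EuclideanSpace ℝ (Fin n)) 1,
        |⟪(ν : EuclideanSpace ℝ (Fin n)), (ϑ : EuclideanSpace ℝ (Fin n))⟫| ^ (2 * s) ∂μ)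
    (hμΛ : μ Set.univ ≤ ENNReal.ofReal Λ)
    (f : ℝ → ℝ) (hf_cont : Continuous f) (hf_mono : Monotone f)
    (u : EuclideanSpace ℝ (Fin n) → ℝ) (hu : ContDiff ℝ 2 u)
    (heq : ∀ x, opI n s μ u x = f (u x))
    (K κ : ℝ) (hK : 0 ≤ K) (hκ0 : 0 ≤ κ) (hκ : κ < 2 * s)
    (hgrowth : ∀ x, |u x| ≤ K * (1 + ‖x‖ ^ κ)) :
    (∀ x, f (u x) = 0) ∧ (∀ x, opI n s μ u x = 0) := by
  have hneg : ∀ x, opI n s μ (fun z => -u z) x = - opI n s μ u x := by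
    intro x
    simp only [opI]
    rw [← MeasureTheory.integral_neg]
    congr 1
    funext p
    ring
  have h1 : ∀ x, f (u x) ≤ 0 :=
    half hs μ f hf_cont hf_mono u hu.continuous heq K κ hK hκ0 hκ hgrowth
  have h2 : ∀ x, -f (u x) ≤ 0 := by
    have h3 := half hs μ (fun t => -f (-t)) ((hf_cont.comp continuous_neg).neg)
      (fun a b hab => neg_le_neg (hf_mono (neg_le_neg hab)))
      (fun z => -u z) hu.continuous.neg
      (fun x => by rw [hneg x, heq x]; simp)
      K κ hK hκ0 hκ (fun x => by simpa [abs_neg] using hgrowth x)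
    intro x
    simpa using h3 x
  have hf0 : ∀ x, f (u x) = 0 := fun x => le_antisymm (h1 x) (by linarith [h2 x])
  exact ⟨hf0, fun x => by rw [heq x, hf0 x]⟩
end
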